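/- Skein relation, knot version (Lemma of Section 5.1, equation (1)): Let G_+ be a one-circle based Gauss diagram with a distinguished arrow x whose sign is +1. Let G_- be the one-circle based Gauss diagram obtained from G_+ by interchanging the tail and the head of x and replacing the sign of x by -1 (all other arrows and signs unchanged), and let G_0 be the smoothing of G_+ along x. Then for every n ≥ 1 one has F_{2n}(G_+) − F_{2n}(G_-) = F_{2n−1}(G_0). -/

import Mathlib

open Finset

/-- The cyclic successor on `Fin m`. -/
def cycSucc {m : ℕ} (x : Fin m) : Fin m :=
  ⟨((x : ℕ) + 1) % m, Nat.mod_lt _ x.pos⟩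

/-- A based Gauss diagram on one circle with `n` arrows: the `2n` endpoint
positions are read counterclockwise starting just after the base point;
`t i` is the tail and `h i` the head of arrow `i`, all endpoints are pairwise
distinct, and `ε i ∈ {1, -1}` is the sign of arrow `i`. -/
structure GaussDiagram (n : ℕ) where
  t : Fin n → Fin (2 * n)
  h : Fin n → Fin (2 * n)
  inj : Function.Injective (Sum.elim t h)
  ε : Fin n → ℤ
  sign : ∀ i, ε i = 1 ∨ ε i = -1

namespace GaussDiagram

variable {n : ℕ}

/-- The bijection between arrow-ends and endpoint positions. -/
noncomputable def ends (G : GaussDiagram n) : (Fin n ⊕ Fin n) ≃ Fin (2 * n) :=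
  Equiv.ofBijective (Sum.elim G.t G.h)
    ((Fintype.bijective_iff_injective_and_card _).mpr ⟨G.inj, by simp [two_mul]⟩)

/-- The involution `μ` exchanging the tail and the head of each arrow. -/
noncomputable def mu (G : GaussDiagram n) (x : Fin (2 * n)) : Fin (2 * n) :=
  G.ends (Sum.swap (G.ends.symm x))

/-- `σ x = μ x + 1 (mod 2n)`. -/
noncomputable def sigma (G : GaussDiagram n) (x : Fin (2 * n)) : Fin (2 * n) :=
  ⟨((G.mu x : ℕ) + 1) % (2 * n), Nat.mod_lt _ x.pos⟩

/-- `G` is one-component iff `σ` is a single cycle of length `2n`,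
i.e. the `σ`-orbit of any position is everything. -/
def OneComponent (G : GaussDiagram n) : Prop :=
  ∀ x y : Fin (2 * n), ∃ k : ℕ, (G.sigma)^[k] x = y

open Classical in
/-- The visit time of a position: the least `k` with `σ^[k] 0 = x`
(junk value `0` if there is none). -/
noncomputable def tau (G : GaussDiagram n) (x : Fin (2 * n)) : ℕ :=
  if hx : ∃ k : ℕ, (G.sigma)^[k] ⟨0, x.pos⟩ = x then Nat.find hx else 0

/-- `G` is ascending iff for every arrow the tail is visited before the head. -/
def Ascending (G : GaussDiagram n) : Prop :=
  ∀ i : Fin n, G.tau (G.t i) < G.tau (G.h i)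

lemma t_injective (G : GaussDiagram n) : Function.Injective G.t := fun i j hij => by
  have := @G.inj (Sum.inl i) (Sum.inl j) hij
  simpa using this

lemma h_injective (G : GaussDiagram n) : Function.Injective G.h := fun i j hij => by
  have := @G.inj (Sum.inr i) (Sum.inr j) hij
  simpa using this

lemma t_ne_h (G : GaussDiagram n) (i j : Fin n) : G.t i ≠ G.h j := fun e => by
  have := @G.inj (Sum.inl i) (Sum.inr j) e
  simp at this

/-- The set of endpoint positions of the arrows in `S`. -/
def posSet (G : GaussDiagram n) (S : Finset (Fin n)) : Finset (Fin (2 * n)) :=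
  S.image G.t ∪ S.image G.h

lemma posSet_card (G : GaussDiagram n) (S : Finset (Fin n)) :
    (G.posSet S).card = 2 * S.card := by
  rw [posSet, card_union_of_disjoint, card_image_of_injective _ G.t_injective,
    card_image_of_injective _ G.h_injective, two_mul]
  rw [disjoint_left]
  rintro a ha hb
  simp only [mem_image] at ha hb
  obtain ⟨i, -, rfl⟩ := ha
  obtain ⟨j, -, hj⟩ := hb
  exact G.t_ne_h i j hj.symm

lemma mem_posSet_t (G : GaussDiagram n) {S : Finset (Fin n)} {i : Fin n} (hi : i ∈ S) :
    G.t i ∈ G.posSet S := mem_union_left _ (mem_image_of_mem _ hi)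

lemma mem_posSet_h (G : GaussDiagram n) {S : Finset (Fin n)} {i : Fin n} (hi : i ∈ S) :
    G.h i ∈ G.posSet S := mem_union_right _ (mem_image_of_mem _ hi)

/-- The sub-diagram consisting of the arrows of `S` alone, with the endpoint
positions renumbered preserving their order. -/
noncomputable def sub (G : GaussDiagram n) (S : Finset (Fin n)) : GaussDiagram S.card where
  t j := ((G.posSet S).orderIsoOfFin (G.posSet_card S)).symm
    ⟨G.t (S.orderIsoOfFin rfl j), G.mem_posSet_t (S.orderIsoOfFin rfl j).2⟩
  h j := ((G.posSet S).orderIsoOfFin (G.posSet_card S)).symm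
    ⟨G.h (S.orderIsoOfFin rfl j), G.mem_posSet_h (S.orderIsoOfFin rfl j).2⟩
  ε j := G.ε (S.orderIsoOfFin rfl j)
  sign j := G.sign _
  inj := by
    have hP : Function.Injective ((G.posSet S).orderIsoOfFin (G.posSet_card S)).symm :=
      (OrderIso.injective _)
    have hA : Function.Injective (S.orderIsoOfFin rfl) := OrderIso.injective _
    rintro (i | i) (j | j) hij <;> simp only [Sum.elim_inl, Sum.elim_inr] at hij <;>
      have h1 := congrArg Subtype.val (hP hij)
    · have h2 := @G.inj (Sum.inl (S.orderIsoOfFin rfl i))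
        (Sum.inl (S.orderIsoOfFin rfl j)) h1
      simp only [Sum.inl.injEq] at h2
      exact congrArg Sum.inl (hA (Subtype.ext h2))
    · have h2 := @G.inj (Sum.inl (S.orderIsoOfFin rfl i))
        (Sum.inr (S.orderIsoOfFin rfl j)) h1
      simp at h2
    · have h2 := @G.inj (Sum.inr (S.orderIsoOfFin rfl i))
        (Sum.inl (S.orderIsoOfFin rfl j)) h1
      simp at h2
    · have h2 := @G.inj (Sum.inr (S.orderIsoOfFin rfl i))
        (Sum.inr (S.orderIsoOfFin rfl j)) h1
      simp only [Sum.inr.injEq] at h2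
      exact congrArg Sum.inr (hA (Subtype.ext h2))

/-- A subset `S` of the arrows is one-component if the sub-diagram on `S` is. -/
def OneComponentSub (G : GaussDiagram n) (S : Finset (Fin n)) : Prop :=
  (G.sub S).OneComponent

/-- A subset `S` of the arrows is ascending if the sub-diagram on `S` is. -/
def AscendingSub (G : GaussDiagram n) (S : Finset (Fin n)) : Prop :=
  (G.sub S).Ascending

open Classical in
/-- `F k G` is the sum over all one-component ascending subsets `S` of the
arrows with `|S| = k` of the product of the signs of the arrows in `S`. -/
noncomputable def F (G : GaussDiagram n) (k : ℕ) : ℤ :=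
  ∑ S : Finset (Fin n),
    if S.card = k ∧ G.OneComponentSub S ∧ G.AscendingSub S then ∏ i ∈ S, G.ε i else 0

end GaussDiagram

/-- A based Gauss diagram on two circles with `n` arrows and endpoint
distribution `(p, q)`: `p` endpoint positions on the first (based) circle and
`q` on the second, with `p + q = 2n`; `t i` is the tail and `h i` the head of
arrow `i`, all endpoints occur exactly once, and `ε i ∈ {1, -1}`. -/
structure GaussDiagram2 (n p q : ℕ) where
  hpq : p + q = 2 * n
  t : Fin n → Fin p ⊕ Fin q
  h : Fin n → Fin p ⊕ Fin q
  inj : Function.Injective (Sum.elim t h)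
  ε : Fin n → ℤ
  sign : ∀ i, ε i = 1 ∨ ε i = -1

namespace GaussDiagram2

variable {n p q : ℕ}

/-- The bijection between arrow-ends and endpoint positions. -/
noncomputable def ends (G : GaussDiagram2 n p q) : (Fin n ⊕ Fin n) ≃ (Fin p ⊕ Fin q) :=
  Equiv.ofBijective (Sum.elim G.t G.h)
    ((Fintype.bijective_iff_injective_and_card _).mpr ⟨G.inj, by
      have := G.hpq; simp only [Fintype.card_sum, Fintype.card_fin]; omega⟩)

/-- The involution `μ` exchanging the tail and the head of each arrow. -/
noncomputable def mu (G : GaussDiagram2 n p q) (x : Fin p ⊕ Fin q) : Fin p ⊕ Fin q :=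
  G.ends (Sum.swap (G.ends.symm x))

/-- `σ x` is the cyclic successor, within its own circle, of `μ x`. -/
noncomputable def sigma (G : GaussDiagram2 n p q) (x : Fin p ⊕ Fin q) : Fin p ⊕ Fin q :=
  Sum.map cycSucc cycSucc (G.mu x)

/-- `G` is one-component iff both circles carry endpoints and `σ` is a single
cycle of length `p + q`. -/
def OneComponent (G : GaussDiagram2 n p q) : Prop :=
  1 ≤ p ∧ 1 ≤ q ∧ ∀ x y : Fin p ⊕ Fin q, ∃ k : ℕ, (G.sigma)^[k] x = y

open Classical in
/-- The visit time of a position: the least `k` with `σ^[k] (inl 0) = x`,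
iterating from position `0` of the first (based) circle
(junk value `0` if there is none or if `p = 0`). -/
noncomputable def tau (G : GaussDiagram2 n p q) (x : Fin p ⊕ Fin q) : ℕ :=
  if hp : 0 < p then
    (if hx : ∃ k : ℕ, (G.sigma)^[k] (Sum.inl ⟨0, hp⟩) = x then Nat.find hx else 0)
  else 0

/-- `G` is ascending iff for every arrow the tail is visited before the head. -/
def Ascending (G : GaussDiagram2 n p q) : Prop :=
  ∀ i : Fin n, G.tau (G.t i) < G.tau (G.h i)

lemma t_injective (G : GaussDiagram2 n p q) : Function.Injective G.t := fun i j hij => by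
  have := @G.inj (Sum.inl i) (Sum.inl j) hij
  simpa using this

lemma h_injective (G : GaussDiagram2 n p q) : Function.Injective G.h := fun i j hij => by
  have := @G.inj (Sum.inr i) (Sum.inr j) hij
  simpa using this

lemma t_ne_h (G : GaussDiagram2 n p q) (i j : Fin n) : G.t i ≠ G.h j := fun e => by
  have := @G.inj (Sum.inl i) (Sum.inr j) e
  simp at this

/-- The set of endpoint positions of the arrows in `S`. -/
def posSet (G : GaussDiagram2 n p q) (S : Finset (Fin n)) : Finset (Fin p ⊕ Fin q) :=
  S.image G.t ∪ S.image G.h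

lemma posSet_card (G : GaussDiagram2 n p q) (S : Finset (Fin n)) :
    (G.posSet S).card = 2 * S.card := by
  rw [posSet, card_union_of_disjoint, card_image_of_injective _ G.t_injective,
    card_image_of_injective _ G.h_injective, two_mul]
  rw [disjoint_left]
  rintro a ha hb
  simp only [mem_image] at ha hb
  obtain ⟨i, -, rfl⟩ := ha
  obtain ⟨j, -, hj⟩ := hb
  exact G.t_ne_h i j hj.symm

lemma mem_posSet_t (G : GaussDiagram2 n p q) {S : Finset (Fin n)} {i : Fin n} (hi : i ∈ S) :
    G.t i ∈ G.posSet S := mem_union_left _ (mem_image_of_mem _ hi)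

lemma mem_posSet_h (G : GaussDiagram2 n p q) {S : Finset (Fin n)} {i : Fin n} (hi : i ∈ S) :
    G.h i ∈ G.posSet S := mem_union_right _ (mem_image_of_mem _ hi)

/-- Order preserving renumbering of the endpoint positions in `E` on each circle. -/
noncomputable def renum (E : Finset (Fin p ⊕ Fin q)) :
    ∀ x ∈ E, Fin E.toLeft.card ⊕ Fin E.toRight.card
  | Sum.inl a, hx => Sum.inl ((E.toLeft.orderIsoOfFin rfl).symm ⟨a, mem_toLeft.mpr hx⟩)
  | Sum.inr b, hx => Sum.inr ((E.toRight.orderIsoOfFin rfl).symm ⟨b, mem_toRight.mpr hx⟩)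

lemma renum_inj (E : Finset (Fin p ⊕ Fin q)) {x y : Fin p ⊕ Fin q} (hx : x ∈ E) (hy : y ∈ E)
    (hxy : renum E x hx = renum E y hy) : x = y := by
  rcases x with a | a <;> rcases y with b | b <;>
    simp only [renum, Sum.inl.injEq, Sum.inr.injEq, reduceCtorEq] at hxy
  · have := congrArg Subtype.val ((OrderIso.injective _) hxy)
    exact congrArg Sum.inl this
  · have := congrArg Subtype.val ((OrderIso.injective _) hxy)
    exact congrArg Sum.inr this

/-- The sub-diagram consisting of the arrows of `S` alone, with the endpoint
positions on each circle renumbered preserving their order. -/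
noncomputable def sub (G : GaussDiagram2 n p q) (S : Finset (Fin n)) :
    GaussDiagram2 S.card (G.posSet S).toLeft.card (G.posSet S).toRight.card where
  hpq := by rw [card_toLeft_add_card_toRight, G.posSet_card]
  t j := renum (G.posSet S) (G.t (S.orderIsoOfFin rfl j))
    (G.mem_posSet_t (S.orderIsoOfFin rfl j).2)
  h j := renum (G.posSet S) (G.h (S.orderIsoOfFin rfl j))
    (G.mem_posSet_h (S.orderIsoOfFin rfl j).2)
  ε j := G.ε (S.orderIsoOfFin rfl j)
  sign j := G.sign _
  inj := by
    have hA : Function.Injective (S.orderIsoOfFin rfl) := OrderIso.injective _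
    rintro (i | i) (j | j) hij <;> simp only [Sum.elim_inl, Sum.elim_inr] at hij <;>
      have h1 := renum_inj _ _ _ hij
    · have h2 := @G.inj (Sum.inl (S.orderIsoOfFin rfl i))
        (Sum.inl (S.orderIsoOfFin rfl j)) h1
      simp only [Sum.inl.injEq] at h2
      exact congrArg Sum.inl (hA (Subtype.ext h2))
    · have h2 := @G.inj (Sum.inl (S.orderIsoOfFin rfl i))
        (Sum.inr (S.orderIsoOfFin rfl j)) h1
      simp at h2
    · have h2 := @G.inj (Sum.inr (S.orderIsoOfFin rfl i))
        (Sum.inl (S.orderIsoOfFin rfl j)) h1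
      simp at h2
    · have h2 := @G.inj (Sum.inr (S.orderIsoOfFin rfl i))
        (Sum.inr (S.orderIsoOfFin rfl j)) h1
      simp only [Sum.inr.injEq] at h2
      exact congrArg Sum.inr (hA (Subtype.ext h2))

/-- A subset `S` of the arrows is one-component if the sub-diagram on `S` is. -/
def OneComponentSub (G : GaussDiagram2 n p q) (S : Finset (Fin n)) : Prop :=
  (G.sub S).OneComponent

/-- A subset `S` of the arrows is ascending if the sub-diagram on `S` is. -/
def AscendingSub (G : GaussDiagram2 n p q) (S : Finset (Fin n)) : Prop :=
  (G.sub S).Ascending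

open Classical in
/-- `F k G` is the sum over all one-component ascending subsets `S` of the
arrows with `|S| = k` of the product of the signs of the arrows in `S`. -/
noncomputable def F (G : GaussDiagram2 n p q) (k : ℕ) : ℤ :=
  ∑ S : Finset (Fin n),
    if S.card = k ∧ G.OneComponentSub S ∧ G.AscendingSub S then ∏ i ∈ S, G.ε i else 0

end GaussDiagram2

/-- Renumbering of the endpoint positions when smoothing a one-circle diagram
along an arrow with endpoints `a < b`: positions `0, …, a-1, b+1, …, 2n-1` go,
in this order, to the first (based) circle and positions `a+1, …, b-1`, in this
cyclic order, to the second circle. -/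
def smoothPos (a b y : ℕ) : ℕ ⊕ ℕ :=
  if y < a then Sum.inl y
  else if y < b then Sum.inr (y - a - 1)
  else Sum.inl (a + (y - b - 1))


section Orbit
variable {α β : Type*} [DecidableEq α]

variable (f : α → α) (a b : α)

/-- step skipping the two deleted points -/
def fSkip (y : α) : α := if f y = a ∨ f y = b then f (f y) else f y

variable {f a b}
variable (hfa : f a ≠ a ∧ f a ≠ b) (hfb : f b ≠ a ∧ f b ≠ b)

include hfa hfb in
lemma fSkip_ne (y : α) : fSkip f a b y ≠ a ∧ fSkip f a b y ≠ b := by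
  unfold fSkip
  split
  · rename_i h
    rcases h with h | h <;> rw [h] <;> [exact hfa; exact hfb]
  · rename_i h
    push_neg at h
    exact h

variable {g : β → β} {ψ : α → β}
variable (hstep : ∀ y, y ≠ a → y ≠ b → g (ψ y) = ψ (fSkip f a b y))

include hfa hfb hstep in
lemma iter_corr : ∀ (i : ℕ) (y : α), y ≠ a → y ≠ b →
    g^[i] (ψ y) = ψ ((fSkip f a b)^[i] y) := by
  intro i
  induction i with
  | zero => intro y _ _; simp
  | succ i ih =>
    intro y hy1 hy2
    rw [Function.iterate_succ_apply, hstep y hy1 hy2, Function.iterate_succ_apply]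
    rcases i with - | i
    · simp
    · exact ih _ (fSkip_ne hfa hfb y).1 (fSkip_ne hfa hfb y).2

include hfa hfb in
lemma fSkip_exists : ∀ (n : ℕ) (y : α), y ≠ a → y ≠ b →
    f^[n] y ≠ a → f^[n] y ≠ b → ∃ i, (fSkip f a b)^[i] y = f^[n] y := by
  intro n
  induction n using Nat.strong_induction_on with
  | _ n ih =>
    match n with
    | 0 => intro y _ _ _ _; exact ⟨0, rfl⟩
    | n + 1 =>
      intro y hy1 hy2 h1 h2
      by_cases hw : f^[n] y = a ∨ f^[n] y = b
      · -- the previous point is a deleted point; go back one more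
        match n, hw with
        | 0, hw => exact absurd hw (by simp [hy1, hy2])
        | n + 1, hw =>
          have hw1 : f^[n] y ≠ a := by
            intro h
            rcases hw with hw | hw <;> rw [Function.iterate_succ_apply', h] at hw
            · exact hfa.1 hw
            · exact hfa.2 hw
          have hw2 : f^[n] y ≠ b := by
            intro h
            rcases hw with hw | hw <;> rw [Function.iterate_succ_apply', h] at hw
            · exact hfb.1 hw
            · exact hfb.2 hw
          obtain ⟨i, hi⟩ := ih n (by omega) y hy1 hy2 hw1 hw2
          refine ⟨i + 1, ?_⟩
          rw [Function.iterate_succ_apply', hi, fSkip]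
          rw [← Function.iterate_succ_apply' f n y]
          rw [if_pos hw, ← Function.iterate_succ_apply' f (n+1) y]
      · push_neg at hw
        obtain ⟨i, hi⟩ := ih n (by omega) y hy1 hy2 hw.1 hw.2
        refine ⟨i + 1, ?_⟩
        rw [Function.iterate_succ_apply', hi, fSkip,
          ← Function.iterate_succ_apply' f n y, if_neg (by push_neg; exact ⟨h1, h2⟩)]

lemma fSkip_as_iter : ∀ (i : ℕ) (y : α), ∃ r, (fSkip f a b)^[i] y = f^[r] y := by
  intro i y
  induction i with
  | zero => exact ⟨0, rfl⟩
  | succ i ih =>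
    obtain ⟨r, hr⟩ := ih
    rw [Function.iterate_succ_apply', hr, fSkip]
    split
    · exact ⟨r + 2, by rw [← Function.iterate_succ_apply' f r y,
        ← Function.iterate_succ_apply' f (r+1) y]⟩
    · exact ⟨r + 1, by rw [← Function.iterate_succ_apply' f r y]⟩

variable (hinj : ∀ y z, y ≠ a → y ≠ b → z ≠ a → z ≠ b → ψ y = ψ z → y = z)
variable (hsurj : ∀ u : β, ∃ y, y ≠ a ∧ y ≠ b ∧ ψ y = u)

include hfa hfb hstep hsurj in
lemma oc_fwd (hoc : ∀ x y : α, ∃ n, f^[n] x = y) (u v : β) : ∃ i, g^[i] u = v := by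
  obtain ⟨y, hy1, hy2, rfl⟩ := hsurj u
  obtain ⟨z, hz1, hz2, rfl⟩ := hsurj v
  obtain ⟨n, hn⟩ := hoc y z
  obtain ⟨i, hi⟩ := fSkip_exists hfa hfb n y hy1 hy2 (hn ▸ hz1) (hn ▸ hz2)
  exact ⟨i, by rw [iter_corr hfa hfb hstep i y hy1 hy2, hi, hn]⟩

include hfa hfb hstep hinj in
lemma oc_bwd (hf : Function.Bijective f) (hoc : ∀ u v : β, ∃ i, g^[i] u = v) :
    ∀ x y : α, ∃ n, f^[n] x = y := by
  -- first for x y outside {a, b}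
  have core : ∀ x y : α, x ≠ a → x ≠ b → y ≠ a → y ≠ b → ∃ n, f^[n] x = y := by
    intro x y hx1 hx2 hy1 hy2
    obtain ⟨i, hi⟩ := hoc (ψ x) (ψ y)
    rw [iter_corr hfa hfb hstep i x hx1 hx2] at hi
    have hne : (fSkip f a b)^[i] x ≠ a ∧ (fSkip f a b)^[i] x ≠ b := by
      rcases i with - | i
      · exact ⟨hx1, hx2⟩
      · rw [Function.iterate_succ_apply']
        exact fSkip_ne hfa hfb _
    have := hinj _ _ hne.1 hne.2 hy1 hy2 hi
    obtain ⟨r, hr⟩ := fSkip_as_iter (f := f) (a := a) (b := b) i x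
    exact ⟨r, by rw [← hr, this]⟩
  intro x y
  -- adjust x
  have step1 : ∀ y : α, y ≠ a → y ≠ b → ∃ n, f^[n] x = y := by
    intro y hy1 hy2
    by_cases hx : x = a ∨ x = b
    · have hfx1 : f x ≠ a := by rcases hx with h | h <;> rw [h] <;> [exact hfa.1; exact hfb.1]
      have hfx2 : f x ≠ b := by rcases hx with h | h <;> rw [h] <;> [exact hfa.2; exact hfb.2]
      obtain ⟨n, hn⟩ := core (f x) y hfx1 hfx2 hy1 hy2
      exact ⟨n + 1, by rw [Function.iterate_succ_apply]; exact hn⟩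
    · push_neg at hx
      exact core x y hx.1 hx.2 hy1 hy2
  by_cases hy : y = a ∨ y = b
  · obtain ⟨z, hz⟩ := hf.2 y
    have hz1 : z ≠ a := by
      intro h; rcases hy with hy | hy <;> rw [h, hy] at hz
      · exact hfa.1 hz
      · exact hfa.2 hz
    have hz2 : z ≠ b := by
      intro h; rcases hy with hy | hy <;> rw [h, hy] at hz
      · exact hfb.1 hz
      · exact hfb.2 hz
    obtain ⟨n, hn⟩ := step1 z hz1 hz2
    exact ⟨n + 1, by rw [Function.iterate_succ_apply', hn, hz]⟩
  · push_neg at hy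
    exact step1 y hy.1 hy.2

section Tau
variable (f a b) (o : α)

/-- number of non-deleted points among the first `j` orbit points -/
def bcount (j : ℕ) : ℕ :=
  ((Finset.range j).filter (fun i => f^[i] o ≠ a ∧ f^[i] o ≠ b)).card

/-- adjusted start -/
def sZero : α := if o = a ∨ o = b then f o else o

variable {f a b o}

lemma bcount_succ (j : ℕ) :
    bcount f a b o (j + 1) =
      bcount f a b o j + (if f^[j] o ≠ a ∧ f^[j] o ≠ b then 1 else 0) := by
  unfold bcount
  rw [Finset.range_add_one, Finset.filter_insert]
  split
  · rw [Finset.card_insert_of_notMem (by simp)]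
  · simp

lemma bcount_mono : Monotone (bcount f a b o) := by
  intro r s hrs
  exact Finset.card_le_card (Finset.filter_subset_filter _ (by simpa using hrs))

include hfa hfb hstep in
lemma orbit_corr : ∀ j, f^[j] o ≠ a → f^[j] o ≠ b →
    g^[bcount f a b o j] (ψ (sZero f a b o)) = ψ (f^[j] o) := by
  intro j
  induction j using Nat.strong_induction_on with
  | _ j ih =>
    match j with
    | 0 =>
      intro h1 h2
      have : sZero f a b o = o := by unfold sZero; rw [if_neg (by push_neg; exact ⟨h1, h2⟩)]
      simp [bcount, this]
    | j + 1 =>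
      intro h1 h2
      by_cases hj : f^[j] o = a ∨ f^[j] o = b
      · rw [bcount_succ, if_neg (by tauto), Nat.add_zero]
        match j, hj with
        | 0, hj =>
          have : sZero f a b o = f o := by
            unfold sZero; rw [if_pos (by simpa using hj)]
          simp [bcount, this]
        | j + 1, hj =>
          have hw1 : f^[j] o ≠ a := by
            intro h
            rcases hj with hj | hj <;> rw [Function.iterate_succ_apply', h] at hj
            · exact hfa.1 hj
            · exact hfa.2 hj
          have hw2 : f^[j] o ≠ b := by
            intro h
            rcases hj with hj | hj <;> rw [Function.iterate_succ_apply', h] at hj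
            · exact hfb.1 hj
            · exact hfb.2 hj
          rw [bcount_succ, if_pos ⟨hw1, hw2⟩]
          rw [Function.iterate_succ_apply' g, ih j (by omega) hw1 hw2,
            hstep _ hw1 hw2, fSkip, if_pos (by rwa [← Function.iterate_succ_apply' f j o]),
            ← Function.iterate_succ_apply' f j o, ← Function.iterate_succ_apply' f (j+1) o]
      · push_neg at hj
        rw [bcount_succ, if_pos hj, Function.iterate_succ_apply' g, ih j (by omega) hj.1 hj.2,
          hstep _ hj.1 hj.2, fSkip,
          if_neg (by rw [← Function.iterate_succ_apply' f j o]; push_neg; exact ⟨h1, h2⟩),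
          ← Function.iterate_succ_apply' f j o]

include hfa hfb hstep in
lemma exists_r : ∀ i : ℕ, ∃ r, g^[i] (ψ (sZero f a b o)) = ψ (f^[r] o) ∧
    f^[r] o ≠ a ∧ f^[r] o ≠ b ∧ bcount f a b o r = i := by
  intro i
  induction i with
  | zero =>
    by_cases ho : o = a ∨ o = b
    · refine ⟨1, ?_, ?_, ?_, ?_⟩
      · simp [sZero, if_pos ho]
      · rcases ho with h | h <;> rw [Function.iterate_one, h]; exacts [hfa.1, hfb.1]
      · rcases ho with h | h <;> rw [Function.iterate_one, h]; exacts [hfa.2, hfb.2]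
      · rw [show (1:ℕ) = 0 + 1 from rfl, bcount_succ,
          if_neg (by simp only [Function.iterate_zero_apply]; tauto)]
        simp [bcount]
    · push_neg at ho
      have hs : sZero f a b o = o := by
        unfold sZero; rw [if_neg (by push_neg; exact ho)]
      exact ⟨0, by simp [hs], ho.1, ho.2, by simp [bcount]⟩
  | succ i ih =>
    obtain ⟨r, h1, h2, h3, h4⟩ := ih
    by_cases hfr : f^[r + 1] o = a ∨ f^[r + 1] o = b
    · refine ⟨r + 2, ?_, ?_, ?_, ?_⟩
      · rw [Function.iterate_succ_apply' g, h1, hstep _ h2 h3, fSkip,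
          if_pos (by rwa [← Function.iterate_succ_apply' f r o]),
          ← Function.iterate_succ_apply' f r o, ← Function.iterate_succ_apply' f (r+1) o]
      · rcases hfr with h | h <;>
          rw [show r+2 = (r+1)+1 from rfl, Function.iterate_succ_apply', h]
        exacts [hfa.1, hfb.1]
      · rcases hfr with h | h <;>
          rw [show r+2 = (r+1)+1 from rfl, Function.iterate_succ_apply', h]
        exacts [hfa.2, hfb.2]
      · rw [show r+2 = (r+1)+1 from rfl, bcount_succ, if_neg (by tauto),
          bcount_succ, if_pos ⟨h2, h3⟩, h4]
    · push_neg at hfr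
      refine ⟨r + 1, ?_, hfr.1, hfr.2, ?_⟩
      · rw [Function.iterate_succ_apply' g, h1, hstep _ h2 h3, fSkip,
          if_neg (by rw [← Function.iterate_succ_apply' f r o]; push_neg; exact hfr),
          ← Function.iterate_succ_apply' f r o]
      · rw [bcount_succ, if_pos ⟨h2, h3⟩, h4]

include hfa hfb hstep hinj in
lemma tau_corr {y : α} (hy1 : y ≠ a) (hy2 : y ≠ b)
    [DecidablePred fun i => g^[i] (ψ (sZero f a b o)) = ψ y]
    [DecidablePred fun n => f^[n] o = y]
    (hgy : ∃ i, g^[i] (ψ (sZero f a b o)) = ψ y) (hfy : ∃ n, f^[n] o = y) :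
    Nat.find hgy = bcount f a b o (Nat.find hfy) := by
  have hspec := Nat.find_spec hfy
  have hle : Nat.find hgy ≤ bcount f a b o (Nat.find hfy) := by
    apply Nat.find_min' hgy
    rw [orbit_corr hfa hfb hstep _ (by rw [hspec]; exact hy1) (by rw [hspec]; exact hy2), hspec]
  have hge : bcount f a b o (Nat.find hfy) ≤ Nat.find hgy := by
    obtain ⟨r, h1, h2, h3, h4⟩ := exists_r (o := o) hfa hfb hstep (Nat.find hgy)
    rw [Nat.find_spec hgy] at h1
    have := hinj _ _ h2 h3 hy1 hy2 h1.symm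
    have hjr : Nat.find hfy ≤ r := Nat.find_min' hfy this
    calc bcount f a b o (Nat.find hfy) ≤ bcount f a b o r := bcount_mono hjr
      _ = Nat.find hgy := h4
  omega

include hfa hfb hstep hinj in
lemma tau_lt_iff {y z : α} (hy1 : y ≠ a) (hy2 : y ≠ b) (hz1 : z ≠ a) (hz2 : z ≠ b)
    [DecidablePred fun i => g^[i] (ψ (sZero f a b o)) = ψ y]
    [DecidablePred fun n => f^[n] o = y]
    [DecidablePred fun i => g^[i] (ψ (sZero f a b o)) = ψ z]
    [DecidablePred fun n => f^[n] o = z]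
    (hgy : ∃ i, g^[i] (ψ (sZero f a b o)) = ψ y) (hfy : ∃ n, f^[n] o = y)
    (hgz : ∃ i, g^[i] (ψ (sZero f a b o)) = ψ z) (hfz : ∃ n, f^[n] o = z) :
    Nat.find hgy < Nat.find hgz ↔ Nat.find hfy < Nat.find hfz := by
  rw [tau_corr hfa hfb hstep hinj hy1 hy2 hgy hfy,
    tau_corr hfa hfb hstep hinj hz1 hz2 hgz hfz]
  constructor
  · intro h
    by_contra hc
    push_neg at hc
    have := bcount_mono (f := f) (a := a) (b := b) (o := o) hc
    omega
  · intro h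
    have h1 : bcount f a b o (Nat.find hfy) + 1 ≤ bcount f a b o (Nat.find hfy + 1) := by
      rw [bcount_succ, if_pos ⟨by rw [Nat.find_spec hfy]; exact hy1,
        by rw [Nat.find_spec hfy]; exact hy2⟩]
    have h2 := bcount_mono (f := f) (a := a) (b := b) (o := o)
      (show Nat.find hfy + 1 ≤ Nat.find hfz by omega)
    omega

end Tau

end Orbit

section Rank
variable {α γ : Type*} [LinearOrder α] [LinearOrder γ]

lemma card_univ_filter_lt {k : ℕ} (i : Fin k) :
    (univ.filter (fun j : Fin k => j < i)).card = (i : ℕ) := by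
  have : (univ.filter (fun j : Fin k => j < i)) = (Finset.range (i : ℕ)).attachFin
      (fun m hm => lt_trans (mem_range.mp hm) i.2) := by
    ext j
    simp only [mem_filter, mem_univ, true_and, mem_attachFin, mem_range, Fin.lt_def]
  rw [this, card_attachFin, card_range]

/-- the rank characterization of `orderIsoOfFin.symm` -/
lemma orderIsoOfFin_symm_rank (s : Finset α) {k : ℕ} (h : s.card = k) (x : α) (hx : x ∈ s) :
    (((s.orderIsoOfFin h).symm ⟨x, hx⟩ : Fin k) : ℕ) = (s.filter (· < x)).card := by
  set e := s.orderIsoOfFin h with he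
  have himg : s.filter (· < x) =
      (univ.filter fun j : Fin k => j < e.symm ⟨x, hx⟩).image (fun j => (e j : α)) := by
    ext y
    simp only [mem_filter, mem_image, mem_univ, true_and]
    constructor
    · rintro ⟨hy, hyx⟩
      refine ⟨e.symm ⟨y, hy⟩, ?_, by simp⟩
      rw [← e.lt_iff_lt, e.apply_symm_apply, e.apply_symm_apply]
      exact hyx
    · rintro ⟨j, hj, rfl⟩
      refine ⟨(e j).2, ?_⟩
      have h2 := e.lt_iff_lt.mpr hj
      rw [e.apply_symm_apply] at h2
      exact h2
  rw [himg, card_image_of_injective _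
    (show Function.Injective (fun j => (e j : α)) from
      fun _ _ hj => e.injective (Subtype.val_injective hj))]
  exact (card_univ_filter_lt _).symm

/-- counting in a finset via its order iso -/
lemma card_filter_orderIso (s : Finset α) {k : ℕ} (h : s.card = k) (P : α → Prop)
    [DecidablePred P] :
    (s.filter P).card = (univ.filter fun z : Fin k => P (s.orderIsoOfFin h z)).card := by
  set e := s.orderIsoOfFin h
  refine Finset.card_bij' (fun x hx => e.symm ⟨x, (mem_filter.mp hx).1⟩)
    (fun z _ => (e z : α)) ?_ ?_ ?_ ?_
  · intro x hx
    simp only [mem_filter, mem_univ, true_and]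
    rw [e.apply_symm_apply]
    exact (mem_filter.mp hx).2
  · intro z hz
    exact mem_filter.mpr ⟨(e z).2, (mem_filter.mp hz).2⟩
  · intro x hx
    simp only [e.apply_symm_apply]
  · intro z hz
    simp only [Subtype.coe_eta, e.symm_apply_apply]

/-- rank is preserved by strictly monotone re-indexings of finsets -/
lemma rank_map (s : Finset α) (t : Finset γ) (φ : α → γ) (hmono : StrictMonoOn φ s)
    (himg : t = s.image φ) {w : α} (hw : w ∈ s) [DecidablePred (· < φ w : γ → Prop)]
    [DecidablePred (· < w : α → Prop)] :
    (t.filter (· < φ w)).card = (s.filter (· < w)).card := by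
  subst himg
  have : (s.image φ).filter (· < φ w) = (s.filter (· < w)).image φ := by
    ext v
    simp only [mem_filter, mem_image]
    constructor
    · rintro ⟨⟨u, hu, rfl⟩, huw⟩
      exact ⟨u, ⟨hu, (hmono.lt_iff_lt hu hw).mp huw⟩, rfl⟩
    · rintro ⟨u, ⟨hu, huw⟩, rfl⟩
      exact ⟨⟨u, hu, rfl⟩, (hmono.lt_iff_lt hu hw).mpr huw⟩
  rw [this, card_image_of_injOn (hmono.injOn.mono (filter_subset _ _))]

end Rank

section ModHelper

lemma mod_succ_eq {v N : ℕ} (hv : v < N) : (v + 1) % N = if v + 1 = N then 0 else v + 1 := by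
  split_ifs with h
  · simp [h]
  · exact Nat.mod_eq_of_lt (by omega)

lemma cycSucc_injective {m : ℕ} : Function.Injective (@cycSucc m) := by
  rintro ⟨v, hv⟩ ⟨w, hw⟩ h
  simp only [cycSucc, Fin.mk.injEq] at h
  rw [mod_succ_eq hv, mod_succ_eq hw] at h
  apply Fin.ext
  simp only
  split_ifs at h <;> omega

lemma sumval_inj {p q : ℕ} : Function.Injective (Sum.map (Fin.val (n := p)) (Fin.val (n := q))) := by
  rintro (u | u) (v | v) h <;> simp only [Sum.map_inl, Sum.map_inr, Sum.inl.injEq,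
    Sum.inr.injEq, reduceCtorEq] at h <;> simp [Fin.ext h]

end ModHelper

namespace GaussDiagram

variable {n : ℕ} (G : GaussDiagram n)

lemma ends_inl (i : Fin n) : G.ends (Sum.inl i) = G.t i := rfl
lemma ends_inr (i : Fin n) : G.ends (Sum.inr i) = G.h i := rfl

lemma mu_t (i : Fin n) : G.mu (G.t i) = G.h i := by
  unfold mu
  rw [← ends_inl, Equiv.symm_apply_apply]
  rfl

lemma mu_h (i : Fin n) : G.mu (G.h i) = G.t i := by
  unfold mu
  rw [← ends_inr, Equiv.symm_apply_apply]
  rfl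

lemma mu_mu (y : Fin (2 * n)) : G.mu (G.mu y) = y := by
  unfold mu
  rw [Equiv.symm_apply_apply, Sum.swap_swap, Equiv.apply_symm_apply]

lemma mu_bijective : Function.Bijective G.mu :=
  Function.Involutive.bijective G.mu_mu

lemma sigma_bijective : Function.Bijective G.sigma := by
  have hinj : Function.Injective G.sigma := by
    intro y z h
    unfold sigma at h
    simp only [Fin.mk.injEq] at h
    rw [mod_succ_eq (G.mu y).2, mod_succ_eq (G.mu z).2] at h
    have : G.mu y = G.mu z := by
      apply Fin.ext
      split_ifs at h <;> omega
    exact G.mu_bijective.1 this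
  exact (Finite.injective_iff_bijective).mp hinj

lemma exists_arrow (y : Fin (2 * n)) : (∃ i, G.t i = y) ∨ (∃ i, G.h i = y) := by
  obtain ⟨s, hs⟩ := G.ends.surjective y
  rcases s with i | i
  · exact Or.inl ⟨i, hs⟩
  · exact Or.inr ⟨i, hs⟩

lemma mem_posSet_iff {S : Finset (Fin n)} {w : Fin (2 * n)} :
    w ∈ G.posSet S ↔ ∃ i ∈ S, G.t i = w ∨ G.h i = w := by
  simp only [posSet, mem_union, mem_image]
  constructor
  · rintro (⟨i, hi, rfl⟩ | ⟨i, hi, rfl⟩)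
    exacts [⟨i, hi, Or.inl rfl⟩, ⟨i, hi, Or.inr rfl⟩]
  · rintro ⟨i, hi, rfl | rfl⟩
    exacts [Or.inl ⟨i, hi, rfl⟩, Or.inr ⟨i, hi, rfl⟩]

open Classical in
lemma tau_injective (hoc : G.OneComponent) {y z : Fin (2 * n)} (h : G.tau y = G.tau z) :
    y = z := by
  have hy : ∃ k : ℕ, (G.sigma)^[k] ⟨0, y.pos⟩ = y := hoc _ y
  have hz : ∃ k : ℕ, (G.sigma)^[k] ⟨0, z.pos⟩ = z := hoc _ z
  rw [tau, dif_pos hy, tau, dif_pos hz] at h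
  have h1 := Nat.find_spec hy
  have h2 := Nat.find_spec hz
  rw [h] at h1
  rw [← h1]; exact h2

end GaussDiagram

namespace GaussDiagram2

variable {n p q : ℕ} (G : GaussDiagram2 n p q)

lemma ends_inl (i : Fin n) : G.ends (Sum.inl i) = G.t i := rfl
lemma ends_inr (i : Fin n) : G.ends (Sum.inr i) = G.h i := rfl

lemma mu_t (i : Fin n) : G.mu (G.t i) = G.h i := by
  unfold mu
  rw [← ends_inl, Equiv.symm_apply_apply]
  rfl

lemma mu_h (i : Fin n) : G.mu (G.h i) = G.t i := by
  unfold mu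
  rw [← ends_inr, Equiv.symm_apply_apply]
  rfl

lemma mem_posSet_iff {S : Finset (Fin n)} {w : Fin p ⊕ Fin q} :
    w ∈ G.posSet S ↔ ∃ i ∈ S, G.t i = w ∨ G.h i = w := by
  simp only [posSet, mem_union, mem_image]
  constructor
  · rintro (⟨i, hi, rfl⟩ | ⟨i, hi, rfl⟩)
    exacts [⟨i, hi, Or.inl rfl⟩, ⟨i, hi, Or.inr rfl⟩]
  · rintro ⟨i, hi, rfl | rfl⟩
    exacts [Or.inl ⟨i, hi, rfl⟩, Or.inr ⟨i, hi, rfl⟩]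

end GaussDiagram2

lemma cycSucc_val {M : ℕ} (v : Fin M) :
    ((cycSucc v : Fin M) : ℕ) = if (v : ℕ) + 1 = M then 0 else (v : ℕ) + 1 :=
  mod_succ_eq v.2

section Psi

variable {N p' q' : ℕ} (hp' : 1 ≤ p') (hq' : 1 ≤ q') (aN bN : ℕ)

/-- the renumbering map from the positions of a one-circle diagram to the
positions of its smoothing -/
def psi (z : Fin N) : Fin p' ⊕ Fin q' :=
  if (z : ℕ) < aN then Sum.inl ⟨min (z : ℕ) (p' - 1), by omega⟩
  else if (z : ℕ) < bN then Sum.inr ⟨min ((z : ℕ) - aN - 1) (q' - 1), by omega⟩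
  else Sum.inl ⟨min (aN + ((z : ℕ) - bN - 1)) (p' - 1), by omega⟩

variable (hpe : p' = aN + (N - 1 - bN)) (hqe : q' = bN - aN - 1)
variable (hab : aN < bN) (hbN : bN < N)

include hpe hqe hab hbN in
lemma psi_spec (z : Fin N) (h1 : (z : ℕ) ≠ aN) (h2 : (z : ℕ) ≠ bN) :
    Sum.map Fin.val Fin.val (psi hp' hq' aN bN z) = smoothPos aN bN (z : ℕ) := by
  have hz := z.2
  unfold psi smoothPos
  split_ifs <;> simp only [Sum.map_inl, Sum.map_inr, Sum.inl.injEq, Sum.inr.injEq] <;> omega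

include hpe hqe hab hbN in
lemma psi_inj {z w : Fin N} (hz1 : (z : ℕ) ≠ aN) (hz2 : (z : ℕ) ≠ bN)
    (hw1 : (w : ℕ) ≠ aN) (hw2 : (w : ℕ) ≠ bN)
    (h : psi hp' hq' aN bN z = psi hp' hq' aN bN w) : z = w := by
  have h2 := congrArg (Sum.map Fin.val Fin.val) h
  rw [psi_spec hp' hq' aN bN hpe hqe hab hbN z hz1 hz2,
    psi_spec hp' hq' aN bN hpe hqe hab hbN w hw1 hw2] at h2
  have hz := z.2; have hw := w.2
  unfold smoothPos at h2
  apply Fin.ext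
  split_ifs at h2 <;> simp only [Sum.inl.injEq, Sum.inr.injEq, reduceCtorEq] at h2 <;> omega

include hpe hqe hab hbN in
lemma psi_surj (u : Fin p' ⊕ Fin q') :
    ∃ z : Fin N, (z : ℕ) ≠ aN ∧ (z : ℕ) ≠ bN ∧ psi hp' hq' aN bN z = u := by
  have hN : 0 < N := by omega
  rcases u with v | v
  · have hv := v.2
    by_cases hva : (v : ℕ) < aN
    · refine ⟨⟨v, by omega⟩, by simp; omega, by simp; omega, ?_⟩
      apply sumval_inj
      rw [psi_spec hp' hq' aN bN hpe hqe hab hbN _ (by simp; omega) (by simp; omega)]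
      unfold smoothPos
      simp only
      rw [if_pos hva]
      simp
    · refine ⟨⟨bN + 1 + ((v : ℕ) - aN), by omega⟩, by simp; omega, by simp; omega, ?_⟩
      apply sumval_inj
      rw [psi_spec hp' hq' aN bN hpe hqe hab hbN _ (by simp; omega) (by simp; omega)]
      unfold smoothPos
      simp only
      rw [if_neg (by omega), if_neg (by omega)]
      simp only [Sum.map_inl, Sum.inl.injEq]
      omega
  · have hv := v.2
    refine ⟨⟨aN + 1 + (v : ℕ), by omega⟩, by simp; omega, by simp; omega, ?_⟩
    apply sumval_inj
    rw [psi_spec hp' hq' aN bN hpe hqe hab hbN _ (by simp; omega) (by simp; omega)]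
    unfold smoothPos
    simp only
    rw [if_neg (by omega), if_pos (by omega)]
    simp only [Sum.map_inr, Sum.inr.injEq]
    omega

set_option maxHeartbeats 2000000 in
include hpe hqe hab hbN in
lemma psi_step (hnd : ¬(aN = 0 ∧ bN = N - 1)) (z w : Fin N)
    (hz1 : (z : ℕ) ≠ aN) (hz2 : (z : ℕ) ≠ bN)
    (hw : (w : ℕ) = if ((z : ℕ) + 1) % N = aN then (bN + 1) % N
      else if ((z : ℕ) + 1) % N = bN then (aN + 1) % N else ((z : ℕ) + 1) % N) :
    Sum.map cycSucc cycSucc (psi hp' hq' aN bN z) = psi hp' hq' aN bN w := by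
  have hz := z.2
  have hwlt := w.2
  rw [mod_succ_eq hz, mod_succ_eq (show bN < N by omega),
    mod_succ_eq (show aN < N by omega)] at hw
  have hw1 : (w : ℕ) ≠ aN := by split_ifs at hw <;> omega
  have hw2 : (w : ℕ) ≠ bN := by split_ifs at hw <;> omega
  apply sumval_inj
  rw [show Sum.map Fin.val Fin.val (psi hp' hq' aN bN w) = smoothPos aN bN (w : ℕ) from
    psi_spec hp' hq' aN bN hpe hqe hab hbN w hw1 hw2]
  have hspec := psi_spec hp' hq' aN bN hpe hqe hab hbN z hz1 hz2
  rcases hpz : psi hp' hq' aN bN z with v | v <;> rw [hpz] at hspec <;> have hv := v.2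
  · simp only [Sum.map_inl] at hspec ⊢
    rw [cycSucc_val]
    unfold smoothPos at hspec ⊢
    split_ifs at hspec hw ⊢ <;>
      simp only [Sum.inl.injEq, Sum.inr.injEq, reduceCtorEq] at hspec ⊢ <;>
      first | exact hspec.elim | omega
  · simp only [Sum.map_inr] at hspec ⊢
    rw [cycSucc_val]
    unfold smoothPos at hspec ⊢
    split_ifs at hspec hw ⊢ <;>
      simp only [Sum.inl.injEq, Sum.inr.injEq, reduceCtorEq] at hspec ⊢ <;>
      first | exact hspec.elim | omega

end Psi

section Counting
open Classical

variable {s : Finset ℕ} {aa bb w : ℕ}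

lemma rank_lt_of_mem (h1 : aa ∈ s) (h : aa < w) :
    (s.filter (· < aa)).card < (s.filter (· < w)).card := by
  apply Finset.card_lt_card
  constructor
  · exact Finset.monotone_filter_right s (fun v _ (hv : v < aa) => by omega)
  · intro hsub
    have := hsub (mem_filter.mpr ⟨h1, h⟩)
    simp at this

lemma rank_le_of_le (h : aa ≤ w) :
    (s.filter (· < aa)).card ≤ (s.filter (· < w)).card :=
  Finset.card_le_card (Finset.monotone_filter_right s (fun v _ (hv : v < aa) => by omega))

lemma filter_card_split (P Q : ℕ → Prop) [DecidablePred P] [DecidablePred Q]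
    (hdisj : ∀ v, ¬(P v ∧ Q v)) :
    (s.filter fun v => P v ∨ Q v).card = (s.filter P).card + (s.filter Q).card := by
  rw [Finset.filter_or, Finset.card_union_of_disjoint]
  rw [Finset.disjoint_left]
  intro v hv1 hv2
  exact hdisj v ⟨(mem_filter.mp hv1).2, (mem_filter.mp hv2).2⟩

lemma card_filter_eq_self (h : aa ∈ s) : (s.filter (· = aa)).card = 1 := by
  rw [Finset.filter_eq', if_pos h, Finset.card_singleton]

lemma rank_split (hc : aa ∈ s) (hw : aa < w) :
    (s.filter (· < w)).card =
      (s.filter (· < aa)).card + 1 + (s.filter fun v => aa < v ∧ v < w).card := by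
  have h1 : s.filter (· < w) = s.filter (fun v => v < aa ∨ (v = aa ∨ (aa < v ∧ v < w))) := by
    apply Finset.filter_congr
    intro v _
    constructor <;> intro h <;> [omega; (rcases h with h | h | h <;> omega)]
  rw [h1, filter_card_split (fun v => v < aa) (fun v => v = aa ∨ (aa < v ∧ v < w))
      (by intro v; omega),
    filter_card_split (fun v => v = aa) (fun v => aa < v ∧ v < w)
      (by intro v; rintro ⟨rfl, h⟩; omega), card_filter_eq_self hc]
  omega

lemma total_split (hc : aa ∈ s) :
    s.card = (s.filter (· < aa)).card + 1 + (s.filter fun v => aa < v).card := by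
  have h1 : s = s.filter (fun v => v < aa ∨ (v = aa ∨ aa < v)) := by
    rw [Finset.filter_true_of_mem]
    intro v _
    omega
  conv_lhs => rw [h1]
  rw [filter_card_split (fun v => v < aa) (fun v => v = aa ∨ aa < v) (by intro v; omega),
    filter_card_split (fun v => v = aa) (fun v => aa < v)
      (by intro v; rintro ⟨rfl, h⟩; omega), card_filter_eq_self hc]
  omega

lemma count_left_total (haa : aa ∈ s) (hbb : bb ∈ s) (hab : aa < bb) :
    (s.filter fun v => v < aa ∨ bb < v).card =
      (s.filter (· < aa)).card + (s.card - (s.filter (· < bb)).card - 1) := by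
  rw [filter_card_split (fun v => v < aa) (fun v => bb < v) (by intro v; omega)]
  have h1 := total_split hbb
  have h2 := rank_split haa hab
  omega

lemma count_right_total (haa : aa ∈ s) (hbb : bb ∈ s) (hab : aa < bb) :
    (s.filter fun v => aa < v ∧ v < bb).card =
      (s.filter (· < bb)).card - (s.filter (· < aa)).card - 1 := by
  have h2 := rank_split haa hab
  omega

lemma count_left_lt_low (hab : aa ≤ bb) (hw : w < aa) :
    (s.filter fun v => (v < aa ∨ bb < v) ∧ v < w).card = (s.filter (· < w)).card := by
  apply congrArg
  apply Finset.filter_congr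
  intro v _
  constructor <;> intro h <;> [exact h.2; exact ⟨Or.inl (by omega), h⟩]

lemma count_left_lt_high (haa : aa ∈ s) (hbb : bb ∈ s) (hab : aa < bb) (hw : bb < w) :
    (s.filter fun v => (v < aa ∨ bb < v) ∧ v < w).card =
      (s.filter (· < aa)).card +
        ((s.filter (· < w)).card - (s.filter (· < bb)).card - 1) := by
  have h1 : s.filter (fun v => (v < aa ∨ bb < v) ∧ v < w) =
      s.filter (fun v => v < aa ∨ (bb < v ∧ v < w)) := by
    apply Finset.filter_congr
    intro v _
    constructor <;> intro h
    · rcases h.1 with h2 | h2 <;> [exact Or.inl h2; exact Or.inr ⟨h2, h.2⟩]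
    · rcases h with h2 | h2 <;> [exact ⟨Or.inl h2, by omega⟩; exact ⟨Or.inr h2.1, h2.2⟩]
  rw [h1, filter_card_split (fun v => v < aa) (fun v => bb < v ∧ v < w) (by intro v; omega)]
  have h2 := rank_split hbb hw
  omega

lemma count_right_lt (haa : aa ∈ s) (hw1 : aa < w) (hw2 : w < bb) :
    (s.filter fun v => (aa < v ∧ v < bb) ∧ v < w).card =
      (s.filter (· < w)).card - (s.filter (· < aa)).card - 1 := by
  have h1 : s.filter (fun v => (aa < v ∧ v < bb) ∧ v < w) =
      s.filter (fun v => aa < v ∧ v < w) := by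
    apply Finset.filter_congr
    intro v _
    constructor <;> intro h <;> [exact ⟨h.1.1, h.2⟩; exact ⟨⟨h.1, by omega⟩, h.2⟩]
  rw [h1]
  have h2 := rank_split haa hw1
  omega

end Counting

section MiscHelpers

lemma symm_congr {γ : Type*} [LinearOrder γ] {s : Finset γ} {k : ℕ} (c : s.card = k)
    {w1 w2 : γ} (h : w1 = w2) (m1 : w1 ∈ s) (m2 : w2 ∈ s) :
    (s.orderIsoOfFin c).symm ⟨w1, m1⟩ = (s.orderIsoOfFin c).symm ⟨w2, m2⟩ := by
  subst h; rfl

lemma find_eq_find {P Q : ℕ → Prop} [DecidablePred P] [DecidablePred Q]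
    (h : ∀ n, P n ↔ Q n) (hP : ∃ n, P n) (hQ : ∃ n, Q n) :
    Nat.find hP = Nat.find hQ := by
  apply le_antisymm
  · exact Nat.find_min' hP ((h _).mpr (Nat.find_spec hQ))
  · exact Nat.find_min' hQ ((h _).mp (Nat.find_spec hP))

end MiscHelpers


section KeyContext

open Classical

variable {m : ℕ} (Gp : GaussDiagram (m + 1)) (x : Fin (m + 1))
  {p q : ℕ} (G0 : GaussDiagram2 m p q) (a b : ℕ)
  (ha : a = min (Gp.t x : ℕ) (Gp.h x : ℕ)) (hb : b = max (Gp.t x : ℕ) (Gp.h x : ℕ))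
  (hp : p = a + (2 * (m + 1) - 1 - b)) (hq : q = b - a - 1)
  (h0t : ∀ i : Fin m,
    Sum.map Fin.val Fin.val (G0.t i) = smoothPos a b (Gp.t (x.succAbove i) : ℕ))
  (h0h : ∀ i : Fin m,
    Sum.map Fin.val Fin.val (G0.h i) = smoothPos a b (Gp.h (x.succAbove i) : ℕ))
  (T : Finset (Fin m))

include ha hb h0t h0h in
lemma posSet_smooth (uu : Fin p ⊕ Fin q) :
    uu ∈ G0.posSet T ↔ ∃ w, ∃ _ : w ∈ Gp.posSet (insert x (T.image x.succAbove)),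
      w ≠ Gp.t x ∧ w ≠ Gp.h x ∧ smoothPos a b (w : ℕ) = Sum.map Fin.val Fin.val uu := by
  rw [GaussDiagram2.mem_posSet_iff]
  constructor
  · rintro ⟨i, hi, hti | hhi⟩
    · refine ⟨Gp.t (x.succAbove i), ?_, ?_, ?_, ?_⟩
      · exact Gp.mem_posSet_t (mem_insert_of_mem (mem_image_of_mem _ hi))
      · intro hcon
        exact Fin.succAbove_ne x i (Gp.t_injective hcon)
      · exact Gp.t_ne_h _ _
      · rw [← h0t i, hti]
    · refine ⟨Gp.h (x.succAbove i), ?_, ?_, ?_, ?_⟩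
      · exact Gp.mem_posSet_h (mem_insert_of_mem (mem_image_of_mem _ hi))
      · exact fun hcon => Gp.t_ne_h x (x.succAbove i) hcon.symm
      · intro hcon
        exact Fin.succAbove_ne x i (Gp.h_injective hcon)
      · rw [← h0h i, hhi]
  · rintro ⟨w, hw, hw1, hw2, hsm⟩
    rw [Gp.mem_posSet_iff] at hw
    obtain ⟨i, hi, hti | hhi⟩ := hw
    · have hix : i ≠ x := fun hcon => hw1 (by rw [← hti, hcon])
      have : i ∈ T.image x.succAbove := by
        rcases mem_insert.mp hi with h | h
        · exact absurd h hix
        · exact h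
      obtain ⟨i', hi', rfl⟩ := mem_image.mp this
      refine ⟨i', hi', Or.inl ?_⟩
      apply sumval_inj
      rw [h0t i', hti, hsm]
    · have hix : i ≠ x := fun hcon => hw2 (by rw [← hhi, hcon])
      have : i ∈ T.image x.succAbove := by
        rcases mem_insert.mp hi with h | h
        · exact absurd h hix
        · exact h
      obtain ⟨i', hi', rfl⟩ := mem_image.mp this
      refine ⟨i', hi', Or.inr ?_⟩
      apply sumval_inj
      rw [h0h i', hhi, hsm]

include ha hb in
lemma endpoint_vals :
    ((Gp.t x : ℕ) = a ∧ (Gp.h x : ℕ) = b) ∨ ((Gp.t x : ℕ) = b ∧ (Gp.h x : ℕ) = a) := by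
  rcases le_total (Gp.t x : ℕ) (Gp.h x : ℕ) with h | h
  · left; constructor <;> omega
  · right; constructor <;> omega

include ha hb in
lemma ne_endpoint_iff {w : Fin (2 * (m + 1))} :
    (w ≠ Gp.t x ∧ w ≠ Gp.h x) ↔ ((w : ℕ) ≠ a ∧ (w : ℕ) ≠ b) := by
  have hab := endpoint_vals Gp x a b ha hb
  have hne : (Gp.t x : ℕ) ≠ (Gp.h x : ℕ) := by
    intro hcon
    exact Gp.t_ne_h x x (Fin.val_injective hcon)
  constructor
  · rintro ⟨h1, h2⟩
    have v1 : (w : ℕ) ≠ (Gp.t x : ℕ) := fun hcon => h1 (Fin.val_injective hcon)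
    have v2 : (w : ℕ) ≠ (Gp.h x : ℕ) := fun hcon => h2 (Fin.val_injective hcon)
    rcases hab with ⟨e1, e2⟩ | ⟨e1, e2⟩ <;> omega
  · rintro ⟨h1, h2⟩
    constructor <;> intro hcon <;> subst hcon <;> rcases hab with ⟨e1, e2⟩ | ⟨e1, e2⟩ <;> omega

include ha hb hp h0t h0h in
lemma imgL :
    (G0.posSet T).toLeft.image Fin.val =
      (((Gp.posSet (insert x (T.image x.succAbove))).image Fin.val).filter
        (fun v => v < a ∨ b < v)).image (fun v => if v < a then v else a + (v - b - 1)) := by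
  have hab : a ≤ b := by omega
  ext u
  simp only [mem_image, Finset.mem_toLeft, mem_filter]
  constructor
  · rintro ⟨uF, hmem, rfl⟩
    obtain ⟨w, hw, hw1, hw2, hsm⟩ := (posSet_smooth Gp x G0 a b ha hb h0t h0h T _).mp hmem
    obtain ⟨hv1, hv2⟩ := (ne_endpoint_iff Gp x a b ha hb).mp ⟨hw1, hw2⟩
    refine ⟨(w : ℕ), ⟨⟨w, hw, rfl⟩, ?_⟩, ?_⟩ <;>
    · unfold smoothPos at hsm
      split_ifs at hsm <;> simp only [Sum.map_inl, Sum.inl.injEq, reduceCtorEq] at hsm <;>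
        first | exact hsm.elim | omega | (split_ifs <;> omega)
  · rintro ⟨v, ⟨⟨w, hw, rfl⟩, hreg⟩, rfl⟩
    obtain ⟨h1, h2⟩ : w ≠ Gp.t x ∧ w ≠ Gp.h x := by
      rw [ne_endpoint_iff Gp x a b ha hb]
      omega
    have hsm : smoothPos a b (w : ℕ) =
        Sum.inl (if (w : ℕ) < a then (w : ℕ) else a + ((w : ℕ) - b - 1)) := by
      unfold smoothPos
      split_ifs <;> first | rfl | omega
    have hlt : (if (w : ℕ) < a then (w : ℕ) else a + ((w : ℕ) - b - 1)) < p := by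
      have := w.2
      split_ifs <;> omega
    refine ⟨⟨_, hlt⟩, ?_, rfl⟩
    rw [posSet_smooth Gp x G0 a b ha hb h0t h0h T]
    exact ⟨w, hw, h1, h2, by rw [hsm]; rfl⟩

include ha hb hq h0t h0h in
lemma imgR :
    (G0.posSet T).toRight.image Fin.val =
      (((Gp.posSet (insert x (T.image x.succAbove))).image Fin.val).filter
        (fun v => a < v ∧ v < b)).image (fun v => v - a - 1) := by
  ext u
  simp only [mem_image, Finset.mem_toRight, mem_filter]
  constructor
  · rintro ⟨uF, hmem, rfl⟩
    obtain ⟨w, hw, hw1, hw2, hsm⟩ := (posSet_smooth Gp x G0 a b ha hb h0t h0h T _).mp hmem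
    obtain ⟨hv1, hv2⟩ := (ne_endpoint_iff Gp x a b ha hb).mp ⟨hw1, hw2⟩
    refine ⟨(w : ℕ), ⟨⟨w, hw, rfl⟩, ?_⟩, ?_⟩ <;>
    · unfold smoothPos at hsm
      split_ifs at hsm <;> simp only [Sum.map_inr, Sum.inr.injEq, reduceCtorEq] at hsm <;>
        first | exact hsm.elim | omega
  · rintro ⟨v, ⟨⟨w, hw, rfl⟩, hreg⟩, rfl⟩
    obtain ⟨h1, h2⟩ : w ≠ Gp.t x ∧ w ≠ Gp.h x := by
      rw [ne_endpoint_iff Gp x a b ha hb]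
      omega
    have hsm : smoothPos a b (w : ℕ) = Sum.inr ((w : ℕ) - a - 1) := by
      unfold smoothPos
      split_ifs <;> first | rfl | omega
    have hlt : (w : ℕ) - a - 1 < q := by omega
    refine ⟨⟨_, hlt⟩, ?_, rfl⟩
    rw [posSet_smooth Gp x G0 a b ha hb h0t h0h T]
    exact ⟨w, hw, h1, h2, by rw [hsm]; rfl⟩

include ha hb in
lemma a_mem_pSn : a ∈ (Gp.posSet (insert x (T.image x.succAbove))).image Fin.val ∧
    b ∈ (Gp.posSet (insert x (T.image x.succAbove))).image Fin.val ∧ a < b := by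
  have hxmem : x ∈ insert x (T.image x.succAbove) := mem_insert_self _ _
  have h1 : Gp.t x ∈ Gp.posSet (insert x (T.image x.succAbove)) := Gp.mem_posSet_t hxmem
  have h2 : Gp.h x ∈ Gp.posSet (insert x (T.image x.succAbove)) := Gp.mem_posSet_h hxmem
  have hne : (Gp.t x : ℕ) ≠ (Gp.h x : ℕ) := by
    intro hcon
    exact Gp.t_ne_h x x (Fin.val_injective hcon)
  rcases endpoint_vals Gp x a b ha hb with ⟨e1, e2⟩ | ⟨e1, e2⟩
  · exact ⟨mem_image.mpr ⟨_, h1, e1⟩, mem_image.mpr ⟨_, h2, e2⟩, by omega⟩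
  · exact ⟨mem_image.mpr ⟨_, h2, e2⟩, mem_image.mpr ⟨_, h1, e1⟩, by omega⟩

lemma monoL {a b : ℕ} (hab : a ≤ b) {s : Finset ℕ} :
    StrictMonoOn (fun v => if v < a then v else a + (v - b - 1))
      ↑(s.filter (fun v => v < a ∨ b < v)) := by
  intro v1 h1 v2 h2 h12
  simp only [Finset.coe_filter, Set.mem_setOf_eq] at h1 h2
  simp only
  split_ifs <;> omega

lemma monoR {a b : ℕ} {s : Finset ℕ} :
    StrictMonoOn (fun v => v - a - 1) ↑(s.filter (fun v => a < v ∧ v < b)) := by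
  intro v1 h1 v2 h2 h12
  simp only [Finset.coe_filter, Set.mem_setOf_eq] at h1 h2
  simp only
  omega

include ha hb hp h0t h0h in
lemma cardL : (G0.posSet T).toLeft.card =
    (((Gp.posSet (insert x (T.image x.succAbove))).image Fin.val).filter (· < a)).card +
      (2 * (insert x (T.image x.succAbove)).card -
        (((Gp.posSet (insert x (T.image x.succAbove))).image Fin.val).filter (· < b)).card
          - 1) := by
  obtain ⟨haS, hbS, hab⟩ := a_mem_pSn Gp x a b ha hb T
  have h1 : (G0.posSet T).toLeft.card = ((G0.posSet T).toLeft.image Fin.val).card :=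
    (Finset.card_image_of_injective _ Fin.val_injective).symm
  rw [h1, imgL Gp x G0 a b ha hb hp h0t h0h T,
    Finset.card_image_of_injOn ((monoL (le_of_lt hab)).injOn),
    count_left_total haS hbS hab,
    Finset.card_image_of_injective _ Fin.val_injective, Gp.posSet_card]

include ha hb hq h0t h0h in
lemma cardR : (G0.posSet T).toRight.card =
    (((Gp.posSet (insert x (T.image x.succAbove))).image Fin.val).filter (· < b)).card -
      (((Gp.posSet (insert x (T.image x.succAbove))).image Fin.val).filter (· < a)).card
        - 1 := by
  obtain ⟨haS, hbS, hab⟩ := a_mem_pSn Gp x a b ha hb T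
  have h1 : (G0.posSet T).toRight.card = ((G0.posSet T).toRight.image Fin.val).card :=
    (Finset.card_image_of_injective _ Fin.val_injective).symm
  rw [h1, imgR Gp x G0 a b ha hb hq h0t h0h T,
    Finset.card_image_of_injOn (monoR.injOn),
    count_right_total haS hbS hab]

include ha hb hp hq h0t h0h in
lemma renum_smooth (uu : Fin p ⊕ Fin q) (hmem : uu ∈ G0.posSet T)
    (w : Fin (2 * (m + 1))) (hw : w ∈ Gp.posSet (insert x (T.image x.succAbove)))
    (hwv1 : (w : ℕ) ≠ a) (hwv2 : (w : ℕ) ≠ b)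
    (hu : smoothPos a b (w : ℕ) = Sum.map Fin.val Fin.val uu) :
    Sum.map Fin.val Fin.val (GaussDiagram2.renum (G0.posSet T) uu hmem) =
      smoothPos
        ((((Gp.posSet (insert x (T.image x.succAbove))).image Fin.val).filter (· < a)).card)
        ((((Gp.posSet (insert x (T.image x.succAbove))).image Fin.val).filter (· < b)).card)
        ((((Gp.posSet (insert x (T.image x.succAbove))).image Fin.val).filter
          (· < (w : ℕ))).card) := by
  obtain ⟨haS, hbS, hab⟩ := a_mem_pSn Gp x a b ha hb T
  set pSn := (Gp.posSet (insert x (T.image x.succAbove))).image Fin.val with hpSn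
  have hwS : (w : ℕ) ∈ pSn := mem_image.mpr ⟨w, hw, rfl⟩
  rcases uu with u | u
  · -- first circle
    have hrenum : GaussDiagram2.renum (G0.posSet T) (Sum.inl u) hmem =
        Sum.inl (((G0.posSet T).toLeft.orderIsoOfFin rfl).symm
          ⟨u, Finset.mem_toLeft.mpr hmem⟩) := rfl
    rw [hrenum]
    simp only [Sum.map_inl]
    rw [orderIsoOfFin_symm_rank]
    -- transfer the count to ℕ
    have hval : ((G0.posSet T).toLeft.filter (· < u)).card =
        (((G0.posSet T).toLeft.image Fin.val).filter (· < (u : ℕ))).card := by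
      exact (rank_map _ _ Fin.val (fun _ _ _ _ h => h) rfl (Finset.mem_toLeft.mpr hmem)).symm
    rw [hval, imgL Gp x G0 a b ha hb hp h0t h0h T]
    -- u.val = φL w.val and region facts
    have hregion : (w : ℕ) < a ∨ b < (w : ℕ) := by
      unfold smoothPos at hu
      split_ifs at hu <;> simp only [Sum.map_inl, Sum.inl.injEq, reduceCtorEq] at hu <;> omega
    have huval : (u : ℕ) = (fun v => if v < a then v else a + (v - b - 1)) ((w : ℕ)) := by
      show (u : ℕ) = if (w : ℕ) < a then (w : ℕ) else a + ((w : ℕ) - b - 1)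
      unfold smoothPos at hu
      split_ifs at hu <;>
        simp only [Sum.map_inl, Sum.inl.injEq, reduceCtorEq] at hu <;>
        first | exact hu.elim | (split_ifs <;> omega)
    have hwmem : (w : ℕ) ∈ pSn.filter (fun v => v < a ∨ b < v) :=
      mem_filter.mpr ⟨hwS, hregion⟩
    rw [huval, rank_map _ _ _ (monoL (le_of_lt hab)) rfl hwmem, Finset.filter_filter]
    rcases hregion with hreg | hreg
    · rw [count_left_lt_low (le_of_lt hab) hreg]
      have hlt := rank_lt_of_mem hwS (show (w : ℕ) < a from hreg)
        -- note: rank_lt_of_mem gives filter(<w) < filter(<a) with roles: (h1 : aa ∈ s) (aa < w)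
      unfold smoothPos
      rw [if_pos]
      · exact rank_lt_of_mem hwS hreg
    · rw [count_left_lt_high haS hbS hab hreg]
      have h2 := rank_le_of_le (s := pSn) (show a ≤ (w : ℕ) by omega)
      have h3 := rank_lt_of_mem hbS hreg
      unfold smoothPos
      rw [if_neg (by omega), if_neg (by omega)]
  · -- second circle
    have hrenum : GaussDiagram2.renum (G0.posSet T) (Sum.inr u) hmem =
        Sum.inr (((G0.posSet T).toRight.orderIsoOfFin rfl).symm
          ⟨u, Finset.mem_toRight.mpr hmem⟩) := rfl
    rw [hrenum]
    simp only [Sum.map_inr]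
    rw [orderIsoOfFin_symm_rank]
    have hval : ((G0.posSet T).toRight.filter (· < u)).card =
        (((G0.posSet T).toRight.image Fin.val).filter (· < (u : ℕ))).card := by
      exact (rank_map _ _ Fin.val (fun _ _ _ _ h => h) rfl (Finset.mem_toRight.mpr hmem)).symm
    rw [hval, imgR Gp x G0 a b ha hb hq h0t h0h T]
    have hregion : a < (w : ℕ) ∧ (w : ℕ) < b := by
      unfold smoothPos at hu
      split_ifs at hu <;> simp only [Sum.map_inr, Sum.inr.injEq, reduceCtorEq] at hu <;> omega
    have huval : (u : ℕ) = (fun v => v - a - 1) ((w : ℕ)) := by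
      show (u : ℕ) = (w : ℕ) - a - 1
      unfold smoothPos at hu
      split_ifs at hu <;>
        simp only [Sum.map_inr, Sum.inr.injEq, reduceCtorEq] at hu <;>
        first | exact hu.elim | omega
    have hwmem : (w : ℕ) ∈ pSn.filter (fun v => a < v ∧ v < b) :=
      mem_filter.mpr ⟨hwS, hregion⟩
    rw [huval, rank_map _ _ _ monoR rfl hwmem, Finset.filter_filter]
    rw [count_right_lt haS hregion.1 hregion.2]
    have h2 := rank_le_of_le (s := pSn) (show a ≤ (w : ℕ) by omega)
    have h3 := rank_lt_of_mem hwS hregion.2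
    unfold smoothPos
    rw [if_neg (by omega), if_pos (by omega)]

include ha hb hp hq h0t h0h in
lemma key_iff :
    ((Gp.sub (insert x (T.image x.succAbove))).OneComponent ∧
      ∀ j : Fin (insert x (T.image x.succAbove)).card,
        (((insert x (T.image x.succAbove)).orderIsoOfFin rfl j : Fin (m + 1)) ≠ x) →
        (Gp.sub (insert x (T.image x.succAbove))).tau
            ((Gp.sub (insert x (T.image x.succAbove))).t j) <
          (Gp.sub (insert x (T.image x.succAbove))).tau
            ((Gp.sub (insert x (T.image x.succAbove))).h j)) ↔
      ((G0.sub T).OneComponent ∧ (G0.sub T).Ascending) := by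
  classical
  set S := insert x (T.image x.succAbove) with hSdef
  have hxS : x ∈ S := mem_insert_self _ _
  have hk1 : 1 ≤ S.card := card_pos.mpr ⟨x, hxS⟩
  obtain ⟨haS, hbS, hab⟩ := a_mem_pSn Gp x a b ha hb T
  set pSn := (Gp.posSet S).image Fin.val with hpSndef
  set aN := (pSn.filter (· < a)).card with haNdef
  set bN := (pSn.filter (· < b)).card with hbNdef
  have hpSncard : pSn.card = 2 * S.card := by
    rw [hpSndef, Finset.card_image_of_injective _ Fin.val_injective, Gp.posSet_card]
  set D := Gp.sub S with hDdef
  set jx := (S.orderIsoOfFin rfl).symm ⟨x, hxS⟩ with hjxdef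
  have hjxval : (((S.orderIsoOfFin rfl) jx : Fin (m + 1))) = x := by
    rw [hjxdef]
    exact congrArg Subtype.val ((S.orderIsoOfFin rfl).apply_symm_apply ⟨x, hxS⟩)
  have rkD : ∀ (w : Fin (2 * (m + 1))) (hw : w ∈ Gp.posSet S),
      ((((Gp.posSet S).orderIsoOfFin (Gp.posSet_card S)).symm ⟨w, hw⟩ : Fin (2 * S.card)) : ℕ)
        = (pSn.filter (· < (w : ℕ))).card := by
    intro w hw
    rw [orderIsoOfFin_symm_rank]
    exact (rank_map _ _ Fin.val (fun _ _ _ _ h => h) rfl hw).symm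
  -- endpoint values of the arrows of D
  have hDtval : ∀ j : Fin S.card,
      ((D.t j : Fin (2 * S.card)) : ℕ) =
        (pSn.filter (· < (Gp.t ((S.orderIsoOfFin rfl) j : Fin (m + 1)) : ℕ))).card :=
    fun j => rkD _ _
  have hDhval : ∀ j : Fin S.card,
      ((D.h j : Fin (2 * S.card)) : ℕ) =
        (pSn.filter (· < (Gp.h ((S.orderIsoOfFin rfl) j : Fin (m + 1)) : ℕ))).card :=
    fun j => rkD _ _
  have hvt : ((D.t jx : Fin (2 * S.card)) : ℕ) = (pSn.filter (· < (Gp.t x : ℕ))).card := by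
    have h1 := hDtval jx
    rwa [hjxval] at h1
  have hvh : ((D.h jx : Fin (2 * S.card)) : ℕ) = (pSn.filter (· < (Gp.h x : ℕ))).card := by
    have h1 := hDhval jx
    rwa [hjxval] at h1
  have habN : aN < bN := rank_lt_of_mem haS hab
  have hbNlt : bN < 2 * S.card := by
    rw [← hpSncard]
    apply Finset.card_lt_card
    constructor
    · exact Finset.filter_subset _ _
    · intro hsub
      have := hsub hbS
      simp at this
  -- identify the positions of the distinguished arrow with aN and bN
  obtain ⟨abar, bbar, habval, hbbval, hmuab, hmuba, hsetab⟩ :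
      ∃ abar bbar : Fin (2 * S.card), (abar : ℕ) = aN ∧ (bbar : ℕ) = bN ∧
        D.mu abar = bbar ∧ D.mu bbar = abar ∧
        (∀ y : Fin (2 * S.card), (y = D.t jx ∨ y = D.h jx) ↔ (y = abar ∨ y = bbar)) := by
    rcases endpoint_vals Gp x a b ha hb with ⟨e1, e2⟩ | ⟨e1, e2⟩
    · refine ⟨D.t jx, D.h jx, by rw [hvt, e1], by rw [hvh, e2], D.mu_t jx, D.mu_h jx,
        fun y => Iff.rfl⟩
    · refine ⟨D.h jx, D.t jx, by rw [hvh, e2], by rw [hvt, e1], D.mu_h jx, D.mu_t jx,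
        fun y => or_comm⟩
  -- cardinalities of the two circles of the smoothing
  have hN2 : 2 ≤ 2 * S.card := by omega
  have hcL : (G0.posSet T).toLeft.card = aN + (2 * S.card - 1 - bN) := by
    have h1 := cardL Gp x G0 a b ha hb hp h0t h0h T
    rw [← hSdef, ← hpSndef, ← haNdef, ← hbNdef] at h1
    rw [h1]
    omega
  have hcR : (G0.posSet T).toRight.card = bN - aN - 1 := by
    have h1 := cardR Gp x G0 a b ha hb hq h0t h0h T
    rw [← hSdef, ← hpSndef, ← haNdef, ← hbNdef] at h1
    exact h1
  by_cases hnd : 1 ≤ (G0.posSet T).toLeft.card ∧ 1 ≤ (G0.posSet T).toRight.card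
  · -- nondegenerate case
    have hndN : ¬(aN = 0 ∧ bN = 2 * S.card - 1) := by
      rintro ⟨h1, h2⟩
      omega
    have hq2 : aN + 2 ≤ bN := by omega
    set E := G0.sub T with hEdef
    set ψ : Fin (2 * S.card) → Fin (G0.posSet T).toLeft.card ⊕ Fin (G0.posSet T).toRight.card
      := fun z => psi hnd.1 hnd.2 aN bN z with hψdef
    have hψspec : ∀ z : Fin (2 * S.card), (z : ℕ) ≠ aN → (z : ℕ) ≠ bN →
        Sum.map Fin.val Fin.val (ψ z) = smoothPos aN bN (z : ℕ) :=
      fun z h1 h2 => psi_spec hnd.1 hnd.2 aN bN hcL hcR habN hbNlt z h1 h2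
    have hvne_a : ∀ {y : Fin (2 * S.card)}, y ≠ abar → (y : ℕ) ≠ aN :=
      fun {y} hy hc => hy (Fin.val_injective (by rw [hc, habval]))
    have hvne_b : ∀ {y : Fin (2 * S.card)}, y ≠ bbar → (y : ℕ) ≠ bN :=
      fun {y} hy hc => hy (Fin.val_injective (by rw [hc, hbbval]))
    have hψinj : ∀ y z : Fin (2 * S.card), y ≠ abar → y ≠ bbar → z ≠ abar → z ≠ bbar →
        ψ y = ψ z → y = z := by
      intro y z hy1 hy2 hz1 hz2 hyz
      exact psi_inj hnd.1 hnd.2 aN bN hcL hcR habN hbNlt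
        (hvne_a hy1) (hvne_b hy2) (hvne_a hz1) (hvne_b hz2) hyz
    have hψsurj : ∀ u : Fin (G0.posSet T).toLeft.card ⊕ Fin (G0.posSet T).toRight.card,
        ∃ y : Fin (2 * S.card), y ≠ abar ∧ y ≠ bbar ∧ ψ y = u := by
      intro u
      obtain ⟨z, h1, h2, h3⟩ := psi_surj hnd.1 hnd.2 aN bN hcL hcR habN hbNlt u
      exact ⟨z, fun hc => h1 (by rw [hc, habval]), fun hc => h2 (by rw [hc, hbbval]), h3⟩
    -- σ values at the distinguished positions
    have hsigab : ((D.sigma abar : Fin (2 * S.card)) : ℕ) = (bN + 1) % (2 * S.card) := by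
      show (((D.mu abar : Fin (2 * S.card)) : ℕ) + 1) % (2 * S.card) = _
      rw [hmuab, hbbval]
    have hsigba : ((D.sigma bbar : Fin (2 * S.card)) : ℕ) = (aN + 1) % (2 * S.card) := by
      show (((D.mu bbar : Fin (2 * S.card)) : ℕ) + 1) % (2 * S.card) = _
      rw [hmuba, habval]
    have hfa : D.sigma abar ≠ abar ∧ D.sigma abar ≠ bbar := by
      constructor
      · intro hc
        have hcv := congrArg Fin.val hc
        rw [hsigab, habval, mod_succ_eq hbNlt] at hcv
        split_ifs at hcv <;> omega
      · intro hc
        have hcv := congrArg Fin.val hc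
        rw [hsigab, hbbval, mod_succ_eq hbNlt] at hcv
        split_ifs at hcv <;> omega
    have hfb : D.sigma bbar ≠ abar ∧ D.sigma bbar ≠ bbar := by
      constructor
      · intro hc
        have hcv := congrArg Fin.val hc
        rw [hsigba, habval, mod_succ_eq (show aN < 2 * S.card by omega)] at hcv
        split_ifs at hcv <;> omega
      · intro hc
        have hcv := congrArg Fin.val hc
        rw [hsigba, hbbval, mod_succ_eq (show aN < 2 * S.card by omega)] at hcv
        split_ifs at hcv <;> omega
    -- arrow correspondence
    have haMmem : ∀ j' : Fin T.card, x.succAbove ((T.orderIsoOfFin rfl) j') ∈ S := by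
      intro j'
      exact mem_insert_of_mem (mem_image_of_mem _ ((T.orderIsoOfFin rfl) j').2)
    set aM : Fin T.card → Fin S.card :=
      fun j' => (S.orderIsoOfFin rfl).symm
        ⟨x.succAbove ((T.orderIsoOfFin rfl) j'), haMmem j'⟩ with haMdef
    have haMval : ∀ j' : Fin T.card, ((S.orderIsoOfFin rfl) (aM j') : Fin (m + 1)) =
        x.succAbove ((T.orderIsoOfFin rfl) j') := by
      intro j'
      exact congrArg Subtype.val ((S.orderIsoOfFin rfl).apply_symm_apply _)
    have hrankne : ∀ {v1 v2 : ℕ}, v1 ∈ pSn → v2 ∈ pSn → v1 ≠ v2 →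
        (pSn.filter (· < v1)).card ≠ (pSn.filter (· < v2)).card := by
      intro v1 v2 h1 h2 hne
      rcases Nat.lt_or_ge v1 v2 with h | h
      · exact Nat.ne_of_lt (rank_lt_of_mem h1 h)
      · have := rank_lt_of_mem h2 (show v2 < v1 by omega)
        omega
    have hwt : ∀ j' : Fin T.card,
        Gp.t (x.succAbove ((T.orderIsoOfFin rfl) j')) ≠ Gp.t x ∧
          Gp.t (x.succAbove ((T.orderIsoOfFin rfl) j')) ≠ Gp.h x := by
      intro j'
      exact ⟨fun hc => Fin.succAbove_ne x _ (Gp.t_injective hc), Gp.t_ne_h _ _⟩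
    have hwh : ∀ j' : Fin T.card,
        Gp.h (x.succAbove ((T.orderIsoOfFin rfl) j')) ≠ Gp.t x ∧
          Gp.h (x.succAbove ((T.orderIsoOfFin rfl) j')) ≠ Gp.h x := by
      intro j'
      exact ⟨fun hc => Gp.t_ne_h x _ hc.symm,
        fun hc => Fin.succAbove_ne x _ (Gp.h_injective hc)⟩
    -- the main endpoint correspondence
    have hKgen : ∀ (w : Fin (2 * (m + 1))) (hw : w ∈ Gp.posSet S), w ≠ Gp.t x → w ≠ Gp.h x →
        ∀ (uu : Fin p ⊕ Fin q) (hmem : uu ∈ G0.posSet T),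
        smoothPos a b (w : ℕ) = Sum.map Fin.val Fin.val uu →
        GaussDiagram2.renum (G0.posSet T) uu hmem =
          ψ (((Gp.posSet S).orderIsoOfFin (Gp.posSet_card S)).symm ⟨w, hw⟩) := by
      intro w hw h1 h2 uu hmem hu
      obtain ⟨hv1, hv2⟩ := (ne_endpoint_iff Gp x a b ha hb).mp ⟨h1, h2⟩
      have hwmem : (w : ℕ) ∈ pSn := mem_image.mpr ⟨w, hw, rfl⟩
      have hz1 : ((((Gp.posSet S).orderIsoOfFin (Gp.posSet_card S)).symm ⟨w, hw⟩ :
          Fin (2 * S.card)) : ℕ) ≠ aN := by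
        rw [rkD w hw]
        exact hrankne hwmem haS hv1
      have hz2 : ((((Gp.posSet S).orderIsoOfFin (Gp.posSet_card S)).symm ⟨w, hw⟩ :
          Fin (2 * S.card)) : ℕ) ≠ bN := by
        rw [rkD w hw]
        exact hrankne hwmem hbS hv2
      apply sumval_inj
      rw [hψspec _ hz1 hz2, rkD w hw]
      have h3 := renum_smooth Gp x G0 a b ha hb hp hq h0t h0h T uu hmem w hw hv1 hv2 hu
      rw [← hSdef, ← hpSndef, ← haNdef, ← hbNdef] at h3
      exact h3
    have hKt : ∀ j' : Fin T.card, E.t j' = ψ (D.t (aM j')) := by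
      intro j'
      have h2 : D.t (aM j') = ((Gp.posSet S).orderIsoOfFin (Gp.posSet_card S)).symm
          ⟨Gp.t (x.succAbove ((T.orderIsoOfFin rfl) j')),
            Gp.mem_posSet_t (haMmem j')⟩ :=
        symm_congr _ (congrArg Gp.t (haMval j')) _ _
      rw [h2]
      exact hKgen _ _ (hwt j').1 (hwt j').2 _ _ (h0t _).symm
    have hKh : ∀ j' : Fin T.card, E.h j' = ψ (D.h (aM j')) := by
      intro j'
      have h2 : D.h (aM j') = ((Gp.posSet S).orderIsoOfFin (Gp.posSet_card S)).symm
          ⟨Gp.h (x.succAbove ((T.orderIsoOfFin rfl) j')),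
            Gp.mem_posSet_h (haMmem j')⟩ :=
        symm_congr _ (congrArg Gp.h (haMval j')) _ _
      rw [h2]
      exact hKgen _ _ (hwh j').1 (hwh j').2 _ _ (h0h _).symm
    -- endpoints of non-distinguished arrows avoid the distinguished positions
    have hBt : ∀ j' : Fin T.card, D.t (aM j') ≠ abar ∧ D.t (aM j') ≠ bbar := by
      intro j'
      have hval : ((D.t (aM j') : Fin (2 * S.card)) : ℕ) =
          (pSn.filter (· < (Gp.t (x.succAbove ((T.orderIsoOfFin rfl) j')) : ℕ))).card := by
        have h1 := hDtval (aM j')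
        rwa [haMval j'] at h1
      obtain ⟨hv1, hv2⟩ := (ne_endpoint_iff Gp x a b ha hb).mp (hwt j')
      have hmemw : (Gp.t (x.succAbove ((T.orderIsoOfFin rfl) j')) : ℕ) ∈ pSn :=
        mem_image.mpr ⟨_, Gp.mem_posSet_t (haMmem j'), rfl⟩
      constructor
      · intro hc
        have hcv := congrArg Fin.val hc
        rw [hval, habval] at hcv
        exact hrankne hmemw haS hv1 hcv
      · intro hc
        have hcv := congrArg Fin.val hc
        rw [hval, hbbval] at hcv
        exact hrankne hmemw hbS hv2 hcv
    have hBh : ∀ j' : Fin T.card, D.h (aM j') ≠ abar ∧ D.h (aM j') ≠ bbar := by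
      intro j'
      have hval : ((D.h (aM j') : Fin (2 * S.card)) : ℕ) =
          (pSn.filter (· < (Gp.h (x.succAbove ((T.orderIsoOfFin rfl) j')) : ℕ))).card := by
        have h1 := hDhval (aM j')
        rwa [haMval j'] at h1
      obtain ⟨hv1, hv2⟩ := (ne_endpoint_iff Gp x a b ha hb).mp (hwh j')
      have hmemw : (Gp.h (x.succAbove ((T.orderIsoOfFin rfl) j')) : ℕ) ∈ pSn :=
        mem_image.mpr ⟨_, Gp.mem_posSet_h (haMmem j'), rfl⟩
      constructor
      · intro hc
        have hcv := congrArg Fin.val hc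
        rw [hval, habval] at hcv
        exact hrankne hmemw haS hv1 hcv
      · intro hc
        have hcv := congrArg Fin.val hc
        rw [hval, hbbval] at hcv
        exact hrankne hmemw hbS hv2 hcv
    -- surjectivity of the arrow correspondence
    have haMsurj : ∀ j : Fin S.card, (((S.orderIsoOfFin rfl) j : Fin (m + 1)) ≠ x) →
        ∃ j', aM j' = j := by
      intro j hjne
      have hmem : ((S.orderIsoOfFin rfl) j : Fin (m + 1)) ∈ T.image x.succAbove := by
        rcases mem_insert.mp ((S.orderIsoOfFin rfl) j).2 with h | h
        · exact absurd h hjne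
        · exact h
      obtain ⟨i', hi', hsucc⟩ := mem_image.mp hmem
      refine ⟨(T.orderIsoOfFin rfl).symm ⟨i', hi'⟩, ?_⟩
      have h5 : x.succAbove ((T.orderIsoOfFin rfl) ((T.orderIsoOfFin rfl).symm ⟨i', hi'⟩)
          : Fin m) = ((S.orderIsoOfFin rfl) j : Fin (m + 1)) := by
        rw [OrderIso.apply_symm_apply]
        exact hsucc
      calc (S.orderIsoOfFin rfl).symm ⟨_, haMmem _⟩
          = (S.orderIsoOfFin rfl).symm ⟨((S.orderIsoOfFin rfl) j : Fin (m + 1)),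
              ((S.orderIsoOfFin rfl) j).2⟩ := symm_congr _ h5 _ _
        _ = (S.orderIsoOfFin rfl).symm ((S.orderIsoOfFin rfl) j) := by rw [Subtype.coe_eta]
        _ = j := (S.orderIsoOfFin rfl).symm_apply_apply j
    -- covering of the positions away from the distinguished arrow
    have hcover : ∀ y : Fin (2 * S.card), y ≠ abar → y ≠ bbar →
        ∃ j', y = D.t (aM j') ∨ y = D.h (aM j') := by
      intro y hy1 hy2
      have hy3 : ¬(y = D.t jx ∨ y = D.h jx) := by
        rw [hsetab y]
        push_neg
        exact ⟨hy1, hy2⟩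
      have hne : ∀ j : Fin S.card, (D.t j = y ∨ D.h j = y) →
          ((S.orderIsoOfFin rfl) j : Fin (m + 1)) ≠ x := by
        intro j hj hc
        have hjx : j = jx := by
          have h6 : (S.orderIsoOfFin rfl) j = (S.orderIsoOfFin rfl) jx :=
            Subtype.ext (by rw [hc, hjxval])
          exact (S.orderIsoOfFin rfl).injective h6
        rcases hj with hj | hj
        · exact hy3 (Or.inl (by rw [← hj, hjx]))
        · exact hy3 (Or.inr (by rw [← hj, hjx]))
      rcases D.exists_arrow y with ⟨j, hj⟩ | ⟨j, hj⟩
      · obtain ⟨j', hj'⟩ := haMsurj j (hne j (Or.inl hj))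
        exact ⟨j', Or.inl (by rw [← hj, hj'])⟩
      · obtain ⟨j', hj'⟩ := haMsurj j (hne j (Or.inr hj))
        exact ⟨j', Or.inr (by rw [← hj, hj'])⟩
    -- μ correspondence
    have hKmu : ∀ y : Fin (2 * S.card), y ≠ abar → y ≠ bbar →
        E.mu (ψ y) = ψ (D.mu y) := by
      intro y hy1 hy2
      obtain ⟨j', hj'⟩ := hcover y hy1 hy2
      rcases hj' with rfl | rfl
      · rw [← hKt j', GaussDiagram2.mu_t, hKh j', GaussDiagram.mu_t]
      · rw [← hKh j', GaussDiagram2.mu_h, hKt j', GaussDiagram.mu_h]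
    -- the step correspondence
    have hstep : ∀ y : Fin (2 * S.card), y ≠ abar → y ≠ bbar →
        E.sigma (ψ y) = ψ (fSkip D.sigma abar bbar y) := by
      intro y hy1 hy2
      have hz1 : D.mu y ≠ abar := by
        intro hc
        apply hy2
        rw [← D.mu_mu y, hc, hmuab]
      have hz2 : D.mu y ≠ bbar := by
        intro hc
        apply hy1
        rw [← D.mu_mu y, hc, hmuba]
      have h1 : E.sigma (ψ y) = Sum.map cycSucc cycSucc (E.mu (ψ y)) := rfl
      rw [h1, hKmu y hy1 hy2]
      have hsv : ((D.sigma y : Fin (2 * S.card)) : ℕ) =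
          (((D.mu y : Fin (2 * S.card)) : ℕ) + 1) % (2 * S.card) := rfl
      have hw : ((fSkip D.sigma abar bbar y : Fin (2 * S.card)) : ℕ) =
          if (((D.mu y : Fin (2 * S.card)) : ℕ) + 1) % (2 * S.card) = aN
            then (bN + 1) % (2 * S.card)
          else if (((D.mu y : Fin (2 * S.card)) : ℕ) + 1) % (2 * S.card) = bN
            then (aN + 1) % (2 * S.card)
          else (((D.mu y : Fin (2 * S.card)) : ℕ) + 1) % (2 * S.card) := by
        unfold fSkip
        by_cases hc1 : D.sigma y = abar
        · have hcond : (((D.mu y : Fin (2 * S.card)) : ℕ) + 1) % (2 * S.card) = aN := by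
            rw [← hsv, hc1, habval]
          rw [if_pos (Or.inl hc1), hc1, if_pos hcond]
          exact hsigab
        · by_cases hc2 : D.sigma y = bbar
          · have hcond : (((D.mu y : Fin (2 * S.card)) : ℕ) + 1) % (2 * S.card) = bN := by
              rw [← hsv, hc2, hbbval]
            rw [if_pos (Or.inr hc2), hc2, if_neg (by rw [hcond]; omega), if_pos hcond]
            exact hsigba
          · have hne1 : ¬((((D.mu y : Fin (2 * S.card)) : ℕ) + 1) % (2 * S.card) = aN) := by
              intro hc
              rw [← hsv] at hc
              exact hc1 (Fin.val_injective (by rw [hc, habval]))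
            have hne2 : ¬((((D.mu y : Fin (2 * S.card)) : ℕ) + 1) % (2 * S.card) = bN) := by
              intro hc
              rw [← hsv] at hc
              exact hc2 (Fin.val_injective (by rw [hc, hbbval]))
            rw [if_neg (by push_neg; exact ⟨hc1, hc2⟩), if_neg hne1, if_neg hne2]
            exact hsv
      exact psi_step hnd.1 hnd.2 aN bN hcL hcR habN hbNlt hndN _ _
        (hvne_a hz1) (hvne_b hz2) hw
    -- one-component correspondence
    have hcycle_iff : D.OneComponent ↔
        (∀ u v : Fin (G0.posSet T).toLeft.card ⊕ Fin (G0.posSet T).toRight.card,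
          ∃ k, (E.sigma)^[k] u = v) := by
      constructor
      · intro hoc u v
        exact oc_fwd hfa hfb hstep hψsurj hoc u v
      · intro hcyc
        exact oc_bwd hfa hfb hstep hψinj D.sigma_bijective hcyc
    -- starting point correspondence
    have hNpos : 0 < 2 * S.card := by omega
    have hstart : ψ (sZero D.sigma abar bbar ⟨0, hNpos⟩) = Sum.inl ⟨0, hnd.1⟩ := by
      by_cases haN0 : aN = 0
      · have hoeq : (⟨0, hNpos⟩ : Fin (2 * S.card)) = abar :=
          Fin.val_injective (by rw [habval, haN0])
        have h1 : sZero D.sigma abar bbar ⟨0, hNpos⟩ = D.sigma abar := by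
          unfold sZero
          rw [if_pos (Or.inl hoeq), hoeq]
        rw [h1]
        have hblt : bN + 1 < 2 * S.card := by omega
        have hsval : ((D.sigma abar : Fin (2 * S.card)) : ℕ) = bN + 1 := by
          rw [hsigab, Nat.mod_eq_of_lt hblt]
        apply sumval_inj
        rw [hψspec _ (by rw [hsval]; omega) (by rw [hsval]; omega), hsval]
        unfold smoothPos
        rw [if_neg (by omega), if_neg (by omega)]
        simp only [Sum.map_inl, Sum.inl.injEq]
        omega
      · have h1 : sZero D.sigma abar bbar ⟨0, hNpos⟩ = ⟨0, hNpos⟩ := by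
          unfold sZero
          rw [if_neg]
          push_neg
          constructor
          · intro hc
            have h7 : (0 : ℕ) = aN := by rw [← habval]; exact congrArg Fin.val hc
            exact haN0 h7.symm
          · intro hc
            have h7 : (0 : ℕ) = bN := by rw [← hbbval]; exact congrArg Fin.val hc
            omega
        rw [h1]
        apply sumval_inj
        rw [hψspec _ (by simpa using fun h => haN0 h.symm) (by simp; omega)]
        unfold smoothPos
        rw [if_pos (by simp; omega)]
        rfl
    have htauE : ∀ (u : Fin (G0.posSet T).toLeft.card ⊕ Fin (G0.posSet T).toRight.card)
        (hu : ∃ i, (E.sigma)^[i] (Sum.inl ⟨0, hnd.1⟩) = u), E.tau u = Nat.find hu := by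
      intro u hu
      rw [GaussDiagram2.tau,
        dif_pos (show (0 : ℕ) < (G0.posSet T).toLeft.card from hnd.1), dif_pos hu]
    have htauD : ∀ (y : Fin (2 * S.card))
        (hy : ∃ k, (D.sigma)^[k] (⟨0, hNpos⟩ : Fin (2 * S.card)) = y),
        D.tau y = Nat.find hy := by
      intro y hy
      rw [GaussDiagram.tau, dif_pos hy]
    have htrans : D.OneComponent → ∀ (y z : Fin (2 * S.card)),
        y ≠ abar → y ≠ bbar → z ≠ abar → z ≠ bbar →
        (E.tau (ψ y) < E.tau (ψ z) ↔ D.tau y < D.tau z) := by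
      intro hoc y z hy1 hy2 hz1 hz2
      have hcyc := hcycle_iff.mp hoc
      have hfy : ∃ k, (D.sigma)^[k] (⟨0, hNpos⟩ : Fin (2 * S.card)) = y := hoc _ y
      have hfz : ∃ k, (D.sigma)^[k] (⟨0, hNpos⟩ : Fin (2 * S.card)) = z := hoc _ z
      have hgy : ∃ i, (E.sigma)^[i] (Sum.inl ⟨0, hnd.1⟩) = ψ y := hcyc _ _
      have hgz : ∃ i, (E.sigma)^[i] (Sum.inl ⟨0, hnd.1⟩) = ψ z := hcyc _ _
      have hgy' : ∃ i, (E.sigma)^[i] (ψ (sZero D.sigma abar bbar ⟨0, hNpos⟩)) = ψ y := by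
        rw [hstart]
        exact hgy
      have hgz' : ∃ i, (E.sigma)^[i] (ψ (sZero D.sigma abar bbar ⟨0, hNpos⟩)) = ψ z := by
        rw [hstart]
        exact hgz
      rw [htauE _ hgy, htauE _ hgz, htauD _ hfy, htauD _ hfz,
        find_eq_find (fun n => by rw [hstart]) hgy hgy',
        find_eq_find (fun n => by rw [hstart]) hgz hgz']
      exact tau_lt_iff hfa hfb hstep hψinj hy1 hy2 hz1 hz2 hgy' hfy hgz' hfz
    constructor
    · rintro ⟨hoc, hasc⟩
      refine ⟨⟨hnd.1, hnd.2, hcycle_iff.mp hoc⟩, ?_⟩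
      intro j'
      rw [hKt j', hKh j',
        htrans hoc _ _ (hBt j').1 (hBt j').2 (hBh j').1 (hBh j').2]
      apply hasc
      rw [haMval j']
      exact Fin.succAbove_ne x _
    · rintro ⟨⟨-, -, hcyc⟩, hasc0⟩
      have hoc : D.OneComponent := hcycle_iff.mpr hcyc
      refine ⟨hoc, ?_⟩
      intro j hjne
      obtain ⟨j', hj'⟩ := haMsurj j hjne
      have h0 := hasc0 j'
      rw [hKt j', hKh j',
        htrans hoc _ _ (hBt j').1 (hBt j').2 (hBh j').1 (hBh j').2, hj'] at h0
      exact h0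
  · -- degenerate case
    constructor
    · rintro ⟨hoc, -⟩
      exfalso
      obtain hdeg | hdeg : (G0.posSet T).toLeft.card = 0 ∨ (G0.posSet T).toRight.card = 0 :=
        by omega
      · have he : aN = 0 ∧ bN = 2 * S.card - 1 := by omega
        have hfix : D.sigma abar = abar := by
          apply Fin.ext
          show (((D.mu abar : Fin (2 * S.card)) : ℕ) + 1) % (2 * S.card) = (abar : ℕ)
          rw [hmuab, hbbval, habval, he.1, he.2,
            show 2 * S.card - 1 + 1 = 2 * S.card by omega, Nat.mod_self]
        have hy : (⟨if (abar : ℕ) = 0 then 1 else 0, by split_ifs <;> omega⟩ :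
            Fin (2 * S.card)) ≠ abar := by
          intro hc
          have h7 : (if (abar : ℕ) = 0 then 1 else 0 : ℕ) = (abar : ℕ) := congrArg Fin.val hc
          split_ifs at h7 <;> omega
        obtain ⟨k, hk⟩ := hoc abar ⟨if (abar : ℕ) = 0 then 1 else 0, by split_ifs <;> omega⟩
        rw [Function.iterate_fixed hfix] at hk
        exact hy hk.symm
      · have he : bN = aN + 1 := by omega
        have hfix : D.sigma bbar = bbar := by
          apply Fin.ext
          show (((D.mu bbar : Fin (2 * S.card)) : ℕ) + 1) % (2 * S.card) = (bbar : ℕ)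
          rw [hmuba, habval, hbbval, ← he, Nat.mod_eq_of_lt hbNlt]
        have hy : (⟨if (bbar : ℕ) = 0 then 1 else 0, by split_ifs <;> omega⟩ :
            Fin (2 * S.card)) ≠ bbar := by
          intro hc
          have h7 : (if (bbar : ℕ) = 0 then 1 else 0 : ℕ) = (bbar : ℕ) := congrArg Fin.val hc
          split_ifs at h7 <;> omega
        obtain ⟨k, hk⟩ := hoc bbar ⟨if (bbar : ℕ) = 0 then 1 else 0, by split_ifs <;> omega⟩
        rw [Function.iterate_fixed hfix] at hk
        exact hy hk.symm
    · rintro ⟨hoc0, -⟩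
      exact absurd ⟨hoc0.1, hoc0.2.1⟩ hnd
end KeyContext

lemma GaussDiagram.ext' {n : ℕ} {G1 G2 : GaussDiagram n} (ht : G1.t = G2.t)
    (hh : G1.h = G2.h) (he : G1.ε = G2.ε) : G1 = G2 := by
  cases G1
  cases G2
  simp only at ht hh he
  subst ht
  subst hh
  subst he
  rfl

lemma symm_congr2 {γ : Type*} [LinearOrder γ] {s1 s2 : Finset γ} (hs : s1 = s2) {k : ℕ}
    (c1 : s1.card = k) (c2 : s2.card = k) {w1 w2 : γ} (h : w1 = w2)
    (m1 : w1 ∈ s1) (m2 : w2 ∈ s2) :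
    (s1.orderIsoOfFin c1).symm ⟨w1, m1⟩ = (s2.orderIsoOfFin c2).symm ⟨w2, m2⟩ := by
  subst hs
  subst h
  rfl

section GmContext

variable {m : ℕ} (Gp Gm : GaussDiagram (m + 1)) (x : Fin (m + 1))
  (hmt : Gm.t = Function.update Gp.t x (Gp.h x))
  (hmh : Gm.h = Function.update Gp.h x (Gp.t x))
  (S : Finset (Fin (m + 1)))

include hmt hmh in
lemma posSet_gm : Gm.posSet S = Gp.posSet S := by
  ext w
  rw [Gm.mem_posSet_iff, Gp.mem_posSet_iff]
  constructor
  · rintro ⟨i, hi, hw⟩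
    by_cases hix : i = x
    · subst hix
      rw [hmt, hmh, Function.update_self, Function.update_self] at hw
      exact ⟨i, hi, hw.symm⟩
    · rw [hmt, hmh, Function.update_of_ne hix, Function.update_of_ne hix] at hw
      exact ⟨i, hi, hw⟩
  · rintro ⟨i, hi, hw⟩
    by_cases hix : i = x
    · subst hix
      refine ⟨i, hi, ?_⟩
      rw [hmt, hmh, Function.update_self, Function.update_self]
      exact hw.symm
    · refine ⟨i, hi, ?_⟩
      rw [hmt, hmh, Function.update_of_ne hix, Function.update_of_ne hix]
      exact hw

include hmt hmh in
lemma sub_t_gm (j : Fin S.card) :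
    (Gm.sub S).t j = if ((S.orderIsoOfFin rfl) j : Fin (m + 1)) = x
      then (Gp.sub S).h j else (Gp.sub S).t j := by
  split_ifs with hc
  · exact symm_congr2 (posSet_gm Gp Gm x hmt hmh S) _ _
      (by rw [hmt]; rw [hc, Function.update_self, ← hc]) _ _
  · exact symm_congr2 (posSet_gm Gp Gm x hmt hmh S) _ _
      (by rw [hmt, Function.update_of_ne hc]) _ _

include hmt hmh in
lemma sub_h_gm (j : Fin S.card) :
    (Gm.sub S).h j = if ((S.orderIsoOfFin rfl) j : Fin (m + 1)) = x
      then (Gp.sub S).t j else (Gp.sub S).h j := by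
  split_ifs with hc
  · exact symm_congr2 (posSet_gm Gp Gm x hmt hmh S) _ _
      (by rw [hmh]; rw [hc, Function.update_self, ← hc]) _ _
  · exact symm_congr2 (posSet_gm Gp Gm x hmt hmh S) _ _
      (by rw [hmh, Function.update_of_ne hc]) _ _

include hmt hmh in
lemma mu_gm : (Gm.sub S).mu = (Gp.sub S).mu := by
  funext y
  rcases (Gp.sub S).exists_arrow y with ⟨j, hj⟩ | ⟨j, hj⟩
  · by_cases hc : ((S.orderIsoOfFin rfl) j : Fin (m + 1)) = x
    · have h1 : (Gm.sub S).h j = y := by rw [sub_h_gm Gp Gm x hmt hmh S j, if_pos hc, hj]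
      have hL : (Gm.sub S).mu y = (Gm.sub S).t j := by rw [← h1, (Gm.sub S).mu_h]
      have hR : (Gp.sub S).mu y = (Gp.sub S).h j := by rw [← hj, (Gp.sub S).mu_t]
      rw [hL, hR, sub_t_gm Gp Gm x hmt hmh S j, if_pos hc]
    · have h1 : (Gm.sub S).t j = y := by rw [sub_t_gm Gp Gm x hmt hmh S j, if_neg hc, hj]
      have hL : (Gm.sub S).mu y = (Gm.sub S).h j := by rw [← h1, (Gm.sub S).mu_t]
      have hR : (Gp.sub S).mu y = (Gp.sub S).h j := by rw [← hj, (Gp.sub S).mu_t]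
      rw [hL, hR, sub_h_gm Gp Gm x hmt hmh S j, if_neg hc]
  · by_cases hc : ((S.orderIsoOfFin rfl) j : Fin (m + 1)) = x
    · have h1 : (Gm.sub S).t j = y := by rw [sub_t_gm Gp Gm x hmt hmh S j, if_pos hc, hj]
      have hL : (Gm.sub S).mu y = (Gm.sub S).h j := by rw [← h1, (Gm.sub S).mu_t]
      have hR : (Gp.sub S).mu y = (Gp.sub S).t j := by rw [← hj, (Gp.sub S).mu_h]
      rw [hL, hR, sub_h_gm Gp Gm x hmt hmh S j, if_pos hc]
    · have h1 : (Gm.sub S).h j = y := by rw [sub_h_gm Gp Gm x hmt hmh S j, if_neg hc, hj]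
      have hL : (Gm.sub S).mu y = (Gm.sub S).t j := by rw [← h1, (Gm.sub S).mu_h]
      have hR : (Gp.sub S).mu y = (Gp.sub S).t j := by rw [← hj, (Gp.sub S).mu_h]
      rw [hL, hR, sub_t_gm Gp Gm x hmt hmh S j, if_neg hc]

include hmt hmh in
lemma sigma_gm : (Gm.sub S).sigma = (Gp.sub S).sigma := by
  funext y
  apply Fin.ext
  show (((Gm.sub S).mu y : ℕ) + 1) % (2 * S.card) = (((Gp.sub S).mu y : ℕ) + 1) % (2 * S.card)
  rw [mu_gm Gp Gm x hmt hmh S]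

include hmt hmh in
lemma oc_gm : (Gm.sub S).OneComponent ↔ (Gp.sub S).OneComponent := by
  unfold GaussDiagram.OneComponent
  rw [sigma_gm Gp Gm x hmt hmh S]

include hmt hmh in
lemma tau_gm : (Gm.sub S).tau = (Gp.sub S).tau := by
  funext y
  have hs := sigma_gm Gp Gm x hmt hmh S
  unfold GaussDiagram.tau
  by_cases hex : ∃ k, (Gp.sub S).sigma^[k] (⟨0, y.pos⟩ : Fin (2 * S.card)) = y
  · have hex2 : ∃ k, (Gm.sub S).sigma^[k] (⟨0, y.pos⟩ : Fin (2 * S.card)) = y := by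
      rw [hs]
      exact hex
    rw [dif_pos hex2, dif_pos hex]
    exact find_eq_find (fun n => by rw [hs]) hex2 hex
  · have hex2 : ¬∃ k, (Gm.sub S).sigma^[k] (⟨0, y.pos⟩ : Fin (2 * S.card)) = y := by
      rw [hs]
      exact hex
    rw [dif_neg hex2, dif_neg hex]

include hmt hmh in
lemma asc_gm (hxS : x ∈ S) :
    (Gm.sub S).Ascending ↔
      ((∀ j : Fin S.card, (((S.orderIsoOfFin rfl) j : Fin (m + 1)) ≠ x) →
        (Gp.sub S).tau ((Gp.sub S).t j) < (Gp.sub S).tau ((Gp.sub S).h j)) ∧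
      (Gp.sub S).tau ((Gp.sub S).h ((S.orderIsoOfFin rfl).symm ⟨x, hxS⟩)) <
        (Gp.sub S).tau ((Gp.sub S).t ((S.orderIsoOfFin rfl).symm ⟨x, hxS⟩))) := by
  have hjxval : (((S.orderIsoOfFin rfl) ((S.orderIsoOfFin rfl).symm ⟨x, hxS⟩)
      : {y // y ∈ S}) : Fin (m + 1)) = x :=
    congrArg Subtype.val ((S.orderIsoOfFin rfl).apply_symm_apply ⟨x, hxS⟩)
  constructor
  · intro hA
    constructor
    · intro j hj
      have h1 := hA j
      rwa [tau_gm Gp Gm x hmt hmh S, sub_t_gm Gp Gm x hmt hmh S j,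
        sub_h_gm Gp Gm x hmt hmh S j, if_neg hj, if_neg hj] at h1
    · have h1 := hA ((S.orderIsoOfFin rfl).symm ⟨x, hxS⟩)
      rwa [tau_gm Gp Gm x hmt hmh S, sub_t_gm Gp Gm x hmt hmh S _,
        sub_h_gm Gp Gm x hmt hmh S _, if_pos hjxval, if_pos hjxval] at h1
  · rintro ⟨h1, h2⟩
    intro j
    rw [tau_gm Gp Gm x hmt hmh S, sub_t_gm Gp Gm x hmt hmh S j,
      sub_h_gm Gp Gm x hmt hmh S j]
    by_cases hc : ((S.orderIsoOfFin rfl) j : Fin (m + 1)) = x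
    · rw [if_pos hc, if_pos hc]
      have hjeq : j = (S.orderIsoOfFin rfl).symm ⟨x, hxS⟩ := by
        apply (S.orderIsoOfFin rfl).injective
        rw [OrderIso.apply_symm_apply]
        exact Subtype.ext hc
      rw [hjeq]
      exact h2
    · rw [if_neg hc, if_neg hc]
      exact h1 j hc

include hmt hmh in
lemma asc_p (hxS : x ∈ S) :
    (Gp.sub S).Ascending ↔
      ((∀ j : Fin S.card, (((S.orderIsoOfFin rfl) j : Fin (m + 1)) ≠ x) →
        (Gp.sub S).tau ((Gp.sub S).t j) < (Gp.sub S).tau ((Gp.sub S).h j)) ∧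
      (Gp.sub S).tau ((Gp.sub S).t ((S.orderIsoOfFin rfl).symm ⟨x, hxS⟩)) <
        (Gp.sub S).tau ((Gp.sub S).h ((S.orderIsoOfFin rfl).symm ⟨x, hxS⟩))) := by
  constructor
  · intro hA
    exact ⟨fun j _ => hA j, hA _⟩
  · rintro ⟨h1, h2⟩
    intro j
    by_cases hc : ((S.orderIsoOfFin rfl) j : Fin (m + 1)) = x
    · have hjeq : j = (S.orderIsoOfFin rfl).symm ⟨x, hxS⟩ := by
        apply (S.orderIsoOfFin rfl).injective
        rw [OrderIso.apply_symm_apply]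
        exact Subtype.ext hc
      rw [hjeq]
      exact h2
    · exact h1 j hc

include hmt hmh in
lemma sub_eq_gm (hxS : x ∉ S) (hε : ∀ i ∈ S, Gm.ε i = Gp.ε i) : Gm.sub S = Gp.sub S := by
  apply GaussDiagram.ext'
  · funext j
    rw [sub_t_gm Gp Gm x hmt hmh S j,
      if_neg (fun hc => hxS (by rw [← hc]; exact ((S.orderIsoOfFin rfl) j).2))]
  · funext j
    rw [sub_h_gm Gp Gm x hmt hmh S j,
      if_neg (fun hc => hxS (by rw [← hc]; exact ((S.orderIsoOfFin rfl) j).2))]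
  · funext j
    exact hε _ ((S.orderIsoOfFin rfl) j).2

end GmContext

theorem conway_skein_knot {m : ℕ} (Gp Gm : GaussDiagram (m + 1)) (x : Fin (m + 1))
    (hx : Gp.ε x = 1)
    (hmt : Gm.t = Function.update Gp.t x (Gp.h x))
    (hmh : Gm.h = Function.update Gp.h x (Gp.t x))
    (hme : Gm.ε = Function.update Gp.ε x (-1))
    {p q : ℕ} (G0 : GaussDiagram2 m p q)
    (a b : ℕ) (ha : a = min (Gp.t x : ℕ) (Gp.h x : ℕ)) (hb : b = max (Gp.t x : ℕ) (Gp.h x : ℕ))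
    (hp : p = a + (2 * (m + 1) - 1 - b)) (hq : q = b - a - 1)
    (h0t : ∀ i : Fin m,
      Sum.map Fin.val Fin.val (G0.t i) = smoothPos a b (Gp.t (x.succAbove i) : ℕ))
    (h0h : ∀ i : Fin m,
      Sum.map Fin.val Fin.val (G0.h i) = smoothPos a b (Gp.h (x.succAbove i) : ℕ))
    (h0e : ∀ i : Fin m, G0.ε i = Gp.ε (x.succAbove i))
    (n : ℕ) (hn : 1 ≤ n) :
    Gp.F (2 * n) - Gm.F (2 * n) = G0.F (2 * n - 1) := by
  classical
  unfold GaussDiagram.F GaussDiagram2.F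
  rw [← Finset.sum_sub_distrib,
    ← Finset.sum_filter_add_sum_filter_not Finset.univ (fun S => x ∈ S)]
  have hzero : ∑ S ∈ Finset.univ.filter (fun S => ¬x ∈ S),
      ((if S.card = 2 * n ∧ Gp.OneComponentSub S ∧ Gp.AscendingSub S
          then ∏ i ∈ S, Gp.ε i else 0) -
        (if S.card = 2 * n ∧ Gm.OneComponentSub S ∧ Gm.AscendingSub S
          then ∏ i ∈ S, Gm.ε i else 0)) = 0 := by
    apply Finset.sum_eq_zero
    intro S hS
    rw [mem_filter] at hS
    have hsub : Gm.sub S = Gp.sub S :=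
      sub_eq_gm Gp Gm x hmt hmh S hS.2 (fun i hi => by
        rw [hme, Function.update_of_ne (fun hc => hS.2 (by rw [← hc]; exact hi))])
    have hprod : ∏ i ∈ S, Gm.ε i = ∏ i ∈ S, Gp.ε i :=
      Finset.prod_congr rfl (fun i hi => by
        rw [hme, Function.update_of_ne (fun hc => hS.2 (by rw [← hc]; exact hi))])
    unfold GaussDiagram.OneComponentSub GaussDiagram.AscendingSub
    rw [hsub, hprod, sub_self]
  rw [hzero, add_zero]
  symm
  apply Finset.sum_bij' (i := fun (T : Finset (Fin m)) (_ : T ∈ Finset.univ) =>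
      insert x (T.image x.succAbove))
    (j := fun (S : Finset (Fin (m + 1))) (_ : S ∈ Finset.univ.filter (fun S => x ∈ S)) =>
      Finset.univ.filter (fun i' => x.succAbove i' ∈ S))
  · intro T _
    exact mem_filter.mpr ⟨mem_univ _, mem_insert_self _ _⟩
  · intro S _
    exact mem_univ _
  · intro T _
    ext i'
    simp only [mem_filter, mem_univ, true_and, mem_insert, mem_image]
    constructor
    · rintro (hc | ⟨i'', hi'', hc⟩)
      · exact absurd hc (Fin.succAbove_ne x i')
      · have h9 : i'' = i' := Fin.succAbove_right_injective hc
        rwa [← h9]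
    · intro hi'
      exact Or.inr ⟨i', hi', rfl⟩
  · intro S hS
    rw [mem_filter] at hS
    ext i
    simp only [mem_insert, mem_image, mem_filter, mem_univ, true_and]
    constructor
    · rintro (rfl | ⟨i', hi', rfl⟩)
      · exact hS.2
      · exact hi'
    · intro hi
      by_cases hix : i = x
      · exact Or.inl hix
      · obtain ⟨i', hi'⟩ := Fin.exists_succAbove_eq hix
        exact Or.inr ⟨i', by rw [hi']; exact hi, hi'⟩
  · intro T _
    set S := insert x (T.image x.succAbove) with hSdef
    have hxS : x ∈ S := mem_insert_self _ _
    have hximg : x ∉ T.image x.succAbove := by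
      simp only [mem_image]
      rintro ⟨i', -, hcon⟩
      exact Fin.succAbove_ne x i' hcon
    have hcardS : S.card = T.card + 1 := by
      rw [hSdef, card_insert_of_notMem hximg,
        Finset.card_image_of_injective _ Fin.succAbove_right_injective]
    have hprodp : ∏ i ∈ S, Gp.ε i = ∏ i' ∈ T, G0.ε i' := by
      rw [hSdef, Finset.prod_insert hximg, hx, one_mul,
        Finset.prod_image (fun a _ b _ h => Fin.succAbove_right_injective h)]
      exact Finset.prod_congr rfl (fun i' _ => (h0e i').symm)
    have hprodm : ∏ i ∈ S, Gm.ε i = -∏ i' ∈ T, G0.ε i' := by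
      rw [hSdef, Finset.prod_insert hximg]
      have h1 : Gm.ε x = -1 := by rw [hme, Function.update_self]
      have h2 : ∏ i ∈ T.image x.succAbove, Gm.ε i = ∏ i' ∈ T, G0.ε i' := by
        rw [Finset.prod_image (fun a _ b _ h => Fin.succAbove_right_injective h)]
        apply Finset.prod_congr rfl
        intro i' _
        rw [hme, Function.update_of_ne (Fin.succAbove_ne x i'), ← h0e i']
      rw [h1, h2]
      ring
    have hKey := key_iff Gp x G0 a b ha hb hp hq h0t h0h T
    rw [← hSdef] at hKey
    have hOCm := oc_gm Gp Gm x hmt hmh S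
    have hAscp := asc_p Gp Gm x hmt hmh S hxS
    have hAscm := asc_gm Gp Gm x hmt hmh S hxS
    by_cases hC : S.card = 2 * n ∧ (Gp.sub S).OneComponent ∧
        (∀ j : Fin S.card, (((S.orderIsoOfFin rfl) j : Fin (m + 1)) ≠ x) →
          (Gp.sub S).tau ((Gp.sub S).t j) < (Gp.sub S).tau ((Gp.sub S).h j))
    · have hcond0 : T.card = 2 * n - 1 ∧ G0.OneComponentSub T ∧ G0.AscendingSub T := by
        obtain ⟨h1, h2⟩ := hKey.mp ⟨hC.2.1, hC.2.2⟩
        exact ⟨by omega, h1, h2⟩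
      rw [if_pos hcond0]
      have hne : (Gp.sub S).tau ((Gp.sub S).t ((S.orderIsoOfFin rfl).symm ⟨x, hxS⟩)) ≠
          (Gp.sub S).tau ((Gp.sub S).h ((S.orderIsoOfFin rfl).symm ⟨x, hxS⟩)) := by
        intro hcon
        exact (Gp.sub S).t_ne_h _ _ ((Gp.sub S).tau_injective hC.2.1 hcon)
      rcases Nat.lt_or_ge ((Gp.sub S).tau ((Gp.sub S).t ((S.orderIsoOfFin rfl).symm ⟨x, hxS⟩)))
        ((Gp.sub S).tau ((Gp.sub S).h ((S.orderIsoOfFin rfl).symm ⟨x, hxS⟩))) with hlt | hge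
      · rw [if_pos ⟨hC.1, hC.2.1, hAscp.mpr ⟨hC.2.2, hlt⟩⟩, if_neg]
        · rw [hprodp]
          ring
        · rintro ⟨-, -, hAm⟩
          have h3 := (hAscm.mp hAm).2
          omega
      · have hgt : (Gp.sub S).tau ((Gp.sub S).h ((S.orderIsoOfFin rfl).symm ⟨x, hxS⟩)) <
            (Gp.sub S).tau ((Gp.sub S).t ((S.orderIsoOfFin rfl).symm ⟨x, hxS⟩)) := by
          omega
        rw [if_neg, if_pos ⟨hC.1, hOCm.mpr hC.2.1, hAscm.mpr ⟨hC.2.2, hgt⟩⟩]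
        · rw [hprodm]
          ring
        · rintro ⟨-, -, hAp⟩
          have h3 := (hAscp.mp hAp).2
          omega
    · have hcond0 : ¬(T.card = 2 * n - 1 ∧ G0.OneComponentSub T ∧ G0.AscendingSub T) := by
        rintro ⟨hc1, hc2, hc3⟩
        apply hC
        obtain ⟨h1, h2⟩ := hKey.mpr ⟨hc2, hc3⟩
        exact ⟨by omega, h1, h2⟩
      rw [if_neg hcond0, if_neg, if_neg]
      · ring
      · rintro ⟨hc1, hc2, hc3⟩
        exact hC ⟨hc1, hOCm.mp hc2, (hAscm.mp hc3).1⟩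
      · rintro ⟨hc1, hc2, hc3⟩
        exact hC ⟨hc1, hc2, (hAscp.mp hc3).1⟩
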